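/- arXiv:1707.00359 — 7 statements merged into one kernel-verified Lean document; each statement's English description precedes it below -/
import Mathlib

section
/- The path on n+1 vertices (of length n) has tree-depth exactly ⌈log₂(n+2)⌉. -/
def IsForestOrder {V : Type} (le : V → V → Prop) : Prop :=
  (∀ x, le x x) ∧ (∀ x y z, le x y → le y z → le x z) ∧
  (∀ x y, le x y → le y x → x = y) ∧
  (∀ x y z, le x y → le x z → (le y z ∨ le z y))

/-- Tree-depth: one more than the minimum height of a rooted forest whose closure
(each vertex adjacent to all its ancestors) contains `G` as a subgraph.
The height of a vertex is its number of strict ancestors. -/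
noncomputable def treeDepth {V : Type} (G : SimpleGraph V) : ℕ :=
  sInf { n : ℕ | ∃ le : V → V → Prop, IsForestOrder le ∧
    (∀ x y, G.Adj x y → (le x y ∨ le y x)) ∧
    (∀ x : V, ({y : V | le x y ∧ y ≠ x}).ncard + 1 ≤ n) }

namespace TDProof

def lbv (b : ℕ) : ℕ := b.factorization 2
def lb (b : ℕ) : ℕ := 2 ^ lbv b

lemma lb_pos (b : ℕ) : 0 < lb b := pow_pos two_pos _

lemma lb_dvd (b : ℕ) : lb b ∣ b := Nat.ordProj_dvd b 2

lemma two_lb_dvd_sub (b : ℕ) (hb : b ≠ 0) :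
    (2 * lb b : ℤ) ∣ (b : ℤ) - lb b ∧ (2 * lb b : ℤ) ∣ (b : ℤ) + lb b := by
  obtain ⟨q, hq⟩ := lb_dvd b
  have hqodd : ¬ 2 ∣ q := by
    rintro ⟨t, ht⟩
    refine Nat.pow_succ_factorization_not_dvd hb Nat.prime_two ⟨t, ?_⟩
    conv_lhs => rw [hq]
    rw [ht, lb, lbv, pow_succ]; ring
  have hqq : q = 2 * (q / 2) + 1 := by omega
  have hb' : (b : ℤ) = lb b * q := by exact_mod_cast congrArg (Nat.cast : ℕ → ℤ) hq
  obtain ⟨t, ht⟩ : ∃ t, q = 2 * t + 1 := ⟨q / 2, hqq⟩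
  constructor
  · exact ⟨t, by rw [hb']; push_cast [ht]; ring⟩
  · exact ⟨t + 1, by rw [hb']; push_cast [ht]; ring⟩

lemma eq_of_dvd_of_abs_lt {d x y : ℤ} (hx : d ∣ x) (hy : d ∣ y) (h : |x - y| < d) : x = y := by
  by_contra hne
  have h1 : d ∣ x - y := dvd_sub hx hy
  have h2 : d ≤ |x - y| := Int.le_of_dvd (abs_pos.mpr (sub_ne_zero.mpr hne)) ((dvd_abs _ _).mpr h1)
  omega

lemma lb_dvd_lb_of_le {a b : ℕ} (h : lb a ≤ lb b) : lb a ∣ lb b :=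
  pow_dvd_pow 2 ((Nat.pow_le_pow_iff_right one_lt_two).mp h)

/-- the BST comparability relation: `b` is an ancestor of `a`. -/
def R (a b : ℕ) : Prop := |(a : ℤ) - b| < lb b

lemma R_refl (a : ℕ) : R a a := by simp [R, lb_pos a]

lemma lb_lt_of_R {a b : ℕ} (h : R a b) (hne : a ≠ b) : lb a < lb b := by
  by_contra hle
  push_neg at hle
  have h1 : (lb b : ℤ) ∣ (a : ℤ) := Int.natCast_dvd_natCast.mpr ((lb_dvd_lb_of_le hle).trans (lb_dvd a))
  have h2 : (lb b : ℤ) ∣ (b : ℤ) := Int.natCast_dvd_natCast.mpr (lb_dvd b)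
  exact hne (by exact_mod_cast eq_of_dvd_of_abs_lt h1 h2 h)

lemma interval_subset {a b : ℕ} (h : R a b) (hne : a ≠ b) :
    (b : ℤ) - lb b ≤ (a : ℤ) - lb a ∧ (a : ℤ) + lb a ≤ (b : ℤ) + lb b := by
  have hlt := lb_lt_of_R h hne
  have hd : (lb a : ℤ) ∣ lb b := Int.natCast_dvd_natCast.mpr (lb_dvd_lb_of_le hlt.le)
  have hda : (lb a : ℤ) ∣ (a : ℤ) := Int.natCast_dvd_natCast.mpr (lb_dvd a)
  have hdb : (lb a : ℤ) ∣ (b : ℤ) := hd.trans (Int.natCast_dvd_natCast.mpr (lb_dvd b))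
  have habs := abs_lt.mp h
  constructor
  · have hpos : 0 < (a : ℤ) - ((b : ℤ) - lb b) := by omega
    have : (lb a : ℤ) ≤ (a : ℤ) - ((b : ℤ) - lb b) :=
      Int.le_of_dvd hpos (by exact dvd_sub hda (dvd_sub hdb hd))
    omega
  · have hpos : 0 < ((b : ℤ) + lb b) - (a : ℤ) := by omega
    have : (lb a : ℤ) ≤ ((b : ℤ) + lb b) - (a : ℤ) :=
      Int.le_of_dvd hpos (by exact dvd_sub (dvd_add hdb hd) hda)
    omega

lemma R_trans {x y z : ℕ} (h1 : R x y) (h2 : R y z) : R x z := by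
  rcases eq_or_ne y z with rfl | hne
  · exact h1
  · have hs := interval_subset h2 hne
    have h1' := abs_lt.mp h1
    exact abs_lt.mpr ⟨by omega, by omega⟩

lemma R_antisymm {a b : ℕ} (h1 : R a b) (h2 : R b a) : a = b := by
  by_contra hne
  exact absurd (lb_lt_of_R h1 hne) (not_lt.mpr (lb_lt_of_R h2 (Ne.symm hne)).le)

lemma R_branch_aux {x y z : ℕ} (hy : y ≠ 0) (hz : z ≠ 0)
    (h1 : R x y) (h2 : R x z) (hle : lb y ≤ lb z) : R y z := by
  rcases eq_or_lt_of_le hle with heq | hlt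
  · -- equal levels: y = z
    have hdy := (two_lb_dvd_sub y hy).1
    have hdz := (two_lb_dvd_sub z hz).1
    rw [heq] at hdy
    have hd : (2 * lb z : ℤ) ∣ (y : ℤ) - (z : ℤ) := by
      have h := dvd_sub hdy hdz
      have hyz : (y : ℤ) - lb z - ((z:ℤ) - lb z) = (y:ℤ) - z := by ring
      rwa [hyz] at h
    have habs : |(y : ℤ) - z| < 2 * lb z := by
      have a1 := abs_lt.mp h1; have a2 := abs_lt.mp h2
      rw [heq] at a1
      rw [abs_lt]; omega
    have hyzeq : y = z := by
      by_contra hne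
      have h2' : (2 * lb z : ℤ) ≤ |(y : ℤ) - z| := by
        refine Int.le_of_dvd (abs_pos.mpr (sub_ne_zero.mpr ?_)) ((dvd_abs _ _).mpr hd)
        exact_mod_cast fun h => hne (Nat.cast_injective h) 
      omega
    rw [hyzeq]; exact R_refl z
  · -- strict: show |y - z| < lb z
    by_contra hnR
    unfold R at hnR
    push_neg at hnR
    have a1 := abs_lt.mp h1; have a2 := abs_lt.mp h2
    have hd : (lb y : ℤ) ∣ (lb z : ℤ) := Int.natCast_dvd_natCast.mpr (lb_dvd_lb_of_le hlt.le)
    have hdy : (lb y : ℤ) ∣ (y : ℤ) := Int.natCast_dvd_natCast.mpr (lb_dvd y)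
    have hdz : (lb y : ℤ) ∣ (z : ℤ) := hd.trans (Int.natCast_dvd_natCast.mpr (lb_dvd z))
    have h2lz := two_lb_dvd_sub z hz
    -- contradiction machinery: if 2 * lb z ∣ y then lb y ≥ 2 * lb z > lb z
    have key : ∀ w : ℤ, (2 * lb z : ℤ) ∣ w → (y : ℤ) = w → False := by
      intro w hw hyw
      have hdyn : (2 ^ (lbv z + 1) : ℕ) ∣ y := by
        have : (2 * (lb z : ℤ)) ∣ (y : ℤ) := hyw ▸ hw
        have h2 : ((2 ^ (lbv z + 1) : ℕ) : ℤ) ∣ (y : ℤ) := by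
          rw [pow_succ]; push_cast; rw [mul_comm ((2:ℤ)^lbv z) 2]; exact (by exact_mod_cast this)
        exact_mod_cast h2
      have : lbv z + 1 ≤ lbv y := (Nat.Prime.pow_dvd_iff_le_factorization Nat.prime_two hy).mp hdyn
      have : lb z < lb y := by
        calc lb z < 2 ^ (lbv z + 1) := by rw [lb]; exact Nat.pow_lt_pow_right one_lt_two (by omega)
        _ ≤ lb y := Nat.pow_le_pow_right (by omega) this
      omega
    rcases le_abs'.mp hnR with hcase | hcase
    ·
      -- hcase : (lb z : ℤ) ≤ -((y:ℤ) - z) i.e. y ≤ z - lb z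
      have hyle : (y : ℤ) ≤ (z : ℤ) - lb z := by omega
      have heq1 : (y : ℤ) = (z : ℤ) - lb z := by
        refine eq_of_dvd_of_abs_lt hdy (dvd_sub hdz hd) ?_
        rw [abs_lt]
        constructor
        · omega
        · omega
      exact key _ h2lz.1 heq1
    · -- (lb z : ℤ) ≤ (y:ℤ) - z, i.e. y ≥ z + lb z
      have heq1 : (y : ℤ) = (z : ℤ) + lb z := by
        refine eq_of_dvd_of_abs_lt hdy (dvd_add hdz hd) ?_
        rw [abs_lt]
        constructor
        · omega
        · omega
      exact key _ h2lz.2 heq1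


lemma R_branch {x y z : ℕ} (hy : y ≠ 0) (hz : z ≠ 0)
    (h1 : R x y) (h2 : R x z) : R y z ∨ R z y := by
  rcases le_total (lb y) (lb z) with h | h
  · exact Or.inl (R_branch_aux hy hz h1 h2 h)
  · exact Or.inr (R_branch_aux hz hy h2 h1 h)

lemma two_le_lb {a : ℕ} (ha : a ≠ 0) (h2 : 2 ∣ a) : 2 ≤ lb a := by
  have h1 : 1 ≤ lbv a :=
    (Nat.Prime.pow_dvd_iff_le_factorization Nat.prime_two ha).mp (by simpa using h2)
  calc 2 = 2 ^ 1 := rfl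
    _ ≤ lb a := Nat.pow_le_pow_right (by omega) h1

lemma R_consec (a : ℕ) (ha : a ≠ 0) : R a (a+1) ∨ R (a+1) a := by
  rcases Nat.even_or_odd a with he | ho
  · right
    have h2 : 2 ≤ lb a := two_le_lb ha he.two_dvd
    unfold R
    rw [show ((a+1:ℕ):ℤ) - (a:ℤ) = 1 by push_cast; ring, abs_one]
    exact_mod_cast h2
  · left
    have h2 : 2 ≤ lb (a+1) := two_le_lb (by omega) (by obtain ⟨t, rfl⟩ := ho; omega)
    unfold R
    rw [show (a:ℤ) - ((a+1:ℕ):ℤ) = -1 by push_cast; ring, abs_neg, abs_one]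
    exact_mod_cast h2

lemma exists_root {V : Type} [Finite V] {le : V → V → Prop} (hF : IsForestOrder le)
    (x : V) : ∃ r, le x r ∧ ∀ z, le r z → z = r := by
  obtain ⟨hrefl, htrans, hanti, hbr⟩ := hF
  obtain ⟨r, hr, hmin⟩ := Set.exists_min_image {y | le x y}
    (fun y => ({w | le y w}).ncard) (Set.toFinite _) ⟨x, hrefl x⟩
  refine ⟨r, hr, fun z hz => ?_⟩
  by_contra hne
  have hsub : {w | le z w} ⊂ {w | le r w} := by
    constructor
    · intro w hw; exact htrans _ _ _ hz hw
    · intro hsub'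
      exact hne (hanti _ _ (hsub' (hrefl r)) hz)
  have hlt : ({w | le z w}).ncard < ({w | le r w}).ncard :=
    Set.ncard_lt_ncard hsub (Set.toFinite _)
  have hzx : z ∈ {y | le x y} := htrans _ _ _ (htrans _ _ _ (hrefl x) hr) hz
  exact absurd (hmin z hzx) (by omega)

lemma path_root {V : Type} [Finite V] {le : V → V → Prop} (hF : IsForestOrder le)
    (f : ℕ → V) (m : ℕ) (hm : 0 < m)
    (hadj : ∀ i, i + 1 < m → le (f i) (f (i+1)) ∨ le (f (i+1)) (f i)) :
    ∃ r, (∀ z, le r z → z = r) ∧ ∀ i < m, le (f i) r := by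
  obtain ⟨r, hr0, hrmax⟩ := exists_root hF (f 0)
  refine ⟨r, hrmax, ?_⟩
  intro i
  induction i with
  | zero => exact fun _ => hr0
  | succ i ih =>
    intro hi
    have h1 : le (f i) r := ih (by omega)
    rcases hadj i hi with h | h
    · rcases hF.2.2.2 _ _ _ h h1 with h' | h'
      · exact h'
      · rw [hrmax _ h']; exact hF.1 r
    · exact hF.2.1 _ _ _ h h1

lemma block_step {V : Type} [Finite V] {le : V → V → Prop} (hF : IsForestOrder le)
    {f : ℕ → V} {m : ℕ}
    (hinj : ∀ i j, i < m → j < m → f i = f j → i = j)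
    (hadj : ∀ i, i + 1 < m → le (f i) (f (i+1)) ∨ le (f (i+1)) (f i))
    {r : V} (hroot : ∀ i < m, le (f i) r) {a len k : ℕ}
    (hal : a + len ≤ m) (hlen : 2 ^ k ≤ len)
    (hne : ∀ j, j < len → f (a + j) ≠ r)
    (IH : ∀ (V : Type), Finite V → ∀ (le : V → V → Prop), IsForestOrder le →
      ∀ (f : ℕ → V) (m : ℕ),
      (∀ i j, i < m → j < m → f i = f j → i = j) →
      (∀ i, i + 1 < m → le (f i) (f (i+1)) ∨ le (f (i+1)) (f i)) →
      2 ^ k ≤ m → ∃ i < m, k ≤ ({y | le (f i) y ∧ y ≠ f i}).ncard) :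
    ∃ i < m, k + 1 ≤ ({y | le (f i) y ∧ y ≠ f i}).ncard := by
  have hlen1 : 1 ≤ len := le_trans (Nat.one_le_two_pow) hlen
  have h0 : f (a + 0) ≠ r := hne 0 (by omega)
  let le' : {v : V // v ≠ r} → {v : V // v ≠ r} → Prop := fun u v => le u.1 v.1
  have hF' : IsForestOrder le' := by
    obtain ⟨hrefl, htrans, hanti, hbr⟩ := hF
    exact ⟨fun x => hrefl x.1, fun x y z h1 h2 => htrans _ _ _ h1 h2,
      fun x y h1 h2 => Subtype.ext (hanti _ _ h1 h2),
      fun x y z h1 h2 => hbr _ _ _ h1 h2⟩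
  let f' : ℕ → {v : V // v ≠ r} := fun j => if h : j < len then ⟨f (a + j), hne j h⟩ else ⟨f (a + 0), h0⟩
  have hf'val : ∀ j, j < len → (f' j).1 = f (a + j) := by
    intro j hj; simp only [f', dif_pos hj]
  obtain ⟨i, hilen, hcard⟩ := IH _ inferInstance le' hF' f' len
    (by
      intro i j hi hj hij
      have := congrArg Subtype.val hij
      rw [hf'val i hi, hf'val j hj] at this
      have := hinj (a + i) (a + j) (by omega) (by omega) this
      omega)
    (by
      intro i hi
      have e1 : (f' i).1 = f (a + i) := hf'val i (by omega)
      have e2 : (f' (i+1)).1 = f (a + i + 1) := by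
        rw [hf'val (i+1) hi]; congr 1
      have := hadj (a + i) (by omega)
      simp only [le', e1, e2]
      exact this)
    hlen
  refine ⟨a + i, by omega, ?_⟩
  set S' : Set {v : V // v ≠ r} := {y | le' (f' i) y ∧ y ≠ f' i} with hS'
  have hfi : (f' i).1 = f (a + i) := hf'val i hilen
  have hsub : insert r (Subtype.val '' S') ⊆ {y | le (f (a + i)) y ∧ y ≠ f (a + i)} := by
    rintro y (rfl | ⟨y', hy', rfl⟩)
    · exact ⟨hroot (a + i) (by omega), Ne.symm (hne i hilen)⟩
    · refine ⟨by rw [← hfi]; exact hy'.1, ?_⟩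
      intro heq
      exact hy'.2 (Subtype.ext (by rw [heq, ← hfi]))
  have hrnot : r ∉ Subtype.val '' S' := by
    rintro ⟨y', _, h⟩; exact y'.2 h
  calc k + 1 ≤ S'.ncard + 1 := by omega
    _ = (Subtype.val '' S').ncard + 1 := by
        rw [Set.ncard_image_of_injective _ Subtype.val_injective]
    _ = (insert r (Subtype.val '' S')).ncard := (Set.ncard_insert_of_notMem hrnot (Set.toFinite _)).symm
    _ ≤ _ := Set.ncard_le_ncard hsub (Set.toFinite _)

lemma lower_core : ∀ (k : ℕ) (V : Type), Finite V → ∀ (le : V → V → Prop), IsForestOrder le →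
    ∀ (f : ℕ → V) (m : ℕ),
    (∀ i j, i < m → j < m → f i = f j → i = j) →
    (∀ i, i + 1 < m → le (f i) (f (i+1)) ∨ le (f (i+1)) (f i)) →
    2 ^ k ≤ m → ∃ i < m, k ≤ ({y | le (f i) y ∧ y ≠ f i}).ncard := by
  intro k
  induction k with
  | zero =>
    intro V _ le _ f m _ _ hm
    exact ⟨0, by simp at hm; omega, Nat.zero_le _⟩
  | succ k ih =>
    intro V hfin le hF f m hinj hadj hm
    have h2k : 2 ^ (k + 1) = 2 * 2 ^ k := by rw [pow_succ]; ring
    have hk1 : 1 ≤ 2 ^ k := Nat.one_le_two_pow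
    obtain ⟨r, hrmax, hroot⟩ := path_root hF f m (by omega) hadj
    by_cases hex : ∃ i0, i0 < m ∧ f i0 = r
    · obtain ⟨i0, hi0m, hfi0⟩ := hex
      rcases le_or_gt (2 ^ k) i0 with hc | hc
      · refine block_step hF hinj hadj hroot (a := 0) (len := i0) (by omega) hc ?_ ih
        intro j hj heq
        have := hinj (0 + j) i0 (by omega) hi0m (by rw [heq, hfi0])
        omega
      · refine block_step hF hinj hadj hroot (a := i0 + 1) (len := m - i0 - 1)
          (by omega) (by omega) ?_ ih
        intro j hj heq
        have := hinj (i0 + 1 + j) i0 (by omega) hi0m (by rw [heq, hfi0])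
        omega
    · push_neg at hex
      refine block_step hF hinj hadj hroot (a := 0) (len := m) (by omega) (by omega) ?_ ih
      intro j hj heq
      exact hex (0 + j) (by omega) heq

end TDProof

/-- The path on `n+1` vertices (of length `n`) has tree-depth exactly `⌈log₂(n+2)⌉`. -/
theorem stmt_3 (n : ℕ) :
    treeDepth (SimpleGraph.pathGraph (n + 1)) = Nat.clog 2 (n + 2) := by
  set K := Nat.clog 2 (n + 2) with hKdef
  have hK1 : 0 < K := Nat.clog_pos one_lt_two (by omega)
  have hpow : n + 2 ≤ 2 ^ K := Nat.le_pow_clog one_lt_two _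
  have hKmem : K ∈ { j : ℕ | ∃ le : Fin (n+1) → Fin (n+1) → Prop, IsForestOrder le ∧
      (∀ x y, (SimpleGraph.pathGraph (n+1)).Adj x y → (le x y ∨ le y x)) ∧
      (∀ x, ({y | le x y ∧ y ≠ x}).ncard + 1 ≤ j) } := by
    refine ⟨fun x y => TDProof.R (x.1+1) (y.1+1), ⟨fun x => TDProof.R_refl _,
      fun x y z h1 h2 => TDProof.R_trans h1 h2, fun x y h1 h2 => ?_,
      fun x y z h1 h2 => TDProof.R_branch (by omega) (by omega) h1 h2⟩, ?_, ?_⟩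
    · have := TDProof.R_antisymm h1 h2
      exact Fin.ext (by omega)
    · intro x y hxy
      rw [SimpleGraph.pathGraph_adj] at hxy
      rcases hxy with h | h
      · have h' := TDProof.R_consec (x.1+1) (by omega)
        show TDProof.R (x.1+1) (y.1+1) ∨ TDProof.R (y.1+1) (x.1+1)
        rw [show y.1 + 1 = x.1 + 1 + 1 by omega]
        exact h'
      · have h' := TDProof.R_consec (y.1+1) (by omega)
        show TDProof.R (x.1+1) (y.1+1) ∨ TDProof.R (y.1+1) (x.1+1)
        rw [show x.1 + 1 = y.1 + 1 + 1 by omega]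
        exact h'.symm
    · intro x
      have hcard : ({y | TDProof.R (x.1+1) (y.1+1) ∧ y ≠ x}).ncard ≤ K - 1 := by
        have hle := Set.ncard_le_ncard_of_injOn (fun y : Fin (n+1) => TDProof.lbv (y.1+1))
          (s := {y | TDProof.R (x.1+1) (y.1+1) ∧ y ≠ x})
          (t := ↑(Finset.Icc 1 (K-1)))
          (by
            intro y hy
            obtain ⟨hR, hne⟩ := hy
            have hne' : x.1 + 1 ≠ y.1 + 1 := by
              intro h; exact hne (Fin.ext (by omega)).symm
            have hlt := TDProof.lb_lt_of_R hR (by omega)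
            have hub : TDProof.lb (y.1+1) ≤ n + 1 :=
              le_trans (Nat.le_of_dvd (by omega) (TDProof.lb_dvd _)) (by omega)
            have hlo : 1 ≤ TDProof.lbv (y.1+1) := by
              by_contra hc
              have h0 : TDProof.lbv (y.1+1) = 0 := by omega
              have : TDProof.lb (y.1+1) = 1 := by rw [TDProof.lb, h0, pow_zero]
              have := TDProof.lb_pos (x.1+1)
              omega
            have hhi : TDProof.lbv (y.1+1) < K := by
              have : (2:ℕ) ^ TDProof.lbv (y.1+1) < 2 ^ K := by
                calc (2:ℕ) ^ TDProof.lbv (y.1+1) = TDProof.lb (y.1+1) := rfl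
                  _ ≤ n + 1 := hub
                  _ < 2 ^ K := by omega
              exact (Nat.pow_lt_pow_iff_right one_lt_two).mp this
            simp only [Finset.coe_Icc, Set.mem_Icc]
            omega)
          (by
            intro y hy z hz hyz
            obtain ⟨hRy, _⟩ := hy
            obtain ⟨hRz, _⟩ := hz
            simp only at hyz
            have hlbeq : TDProof.lb (y.1+1) = TDProof.lb (z.1+1) := by
              rw [TDProof.lb, TDProof.lb, hyz]
            have hvals : y.1 + 1 = z.1 + 1 := by
              rcases TDProof.R_branch (x := x.1+1) (by omega) (by omega) hRy hRz with h | h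
              · by_contra hne
                have := TDProof.lb_lt_of_R h hne
                omega
              · by_contra hne
                have := TDProof.lb_lt_of_R h (Ne.symm hne)
                omega
            exact Fin.ext (by omega))
          (Set.toFinite _)
        rwa [Set.ncard_coe_finset, Nat.card_Icc, show K - 1 + 1 - 1 = K - 1 by omega] at hle
      show ({y | TDProof.R (x.1+1) (y.1+1) ∧ y ≠ x}).ncard + 1 ≤ K
      omega
  have hlow : ∀ j ∈ { j : ℕ | ∃ le : Fin (n+1) → Fin (n+1) → Prop, IsForestOrder le ∧
      (∀ x y, (SimpleGraph.pathGraph (n+1)).Adj x y → (le x y ∨ le y x)) ∧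
      (∀ x, ({y | le x y ∧ y ≠ x}).ncard + 1 ≤ j) }, K ≤ j := by
    intro j hj
    obtain ⟨le, hF, hadj, hcd⟩ := hj
    have hpred : 2 ^ (K - 1) < n + 2 := by
      have := Nat.pow_pred_clog_lt_self one_lt_two (show 1 < n + 2 by omega)
      rwa [Nat.pred_eq_sub_one] at this
    set f : ℕ → Fin (n+1) := fun i => ⟨min i n, by omega⟩ with hfdef
    obtain ⟨i, him, hki⟩ := TDProof.lower_core (K-1) (Fin (n+1)) inferInstance le hF f (n+1)
      (by
        intro i j hi hj hij
        have := congrArg Fin.val hij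
        simp only [hfdef] at this
        omega)
      (by
        intro i hi
        apply hadj
        rw [SimpleGraph.pathGraph_adj]
        left
        show min i n + 1 = min (i+1) n
        omega)
      (by omega)
    have := hcd (f i)
    omega
  exact le_antisymm (Nat.sInf_le hKmem) (le_csInf ⟨K, hKmem⟩ hlow)
end

section
/- If a graph G has tree-depth d, then G has a tree-model with 2^d colours and depth d; moreover, if G is connected, then G has a tree-model with 2^d colours and depth d−1. -/
/-- Length of the longest common prefix of `f` and `g` (as strings of length `d`). -/
def prefLen {d : ℕ} (f g : Fin d → ℕ) : ℕ :=
  Nat.findGreatest (fun k => ∀ i : Fin d, (i : ℕ) < k → f i = g i) d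

/-- A tree-model of `m` colours and depth `d` for the graph `G`:
a rooted tree of uniform root-to-leaf distance `d` whose leaves are exactly `V(G)`
(encoded by the injective map `f` sending each leaf to its root-to-leaf address),
a colouring of the leaves by `m` colours, and a symmetric signature `S` such that
two distinct vertices `u,v` are adjacent iff `(col u, col v, ℓ) ∈ S`, where `2ℓ`
is the tree-distance between `u` and `v` in the tree. -/
structure TreeModel {V : Type} (G : SimpleGraph V) (d m : ℕ) where
  f : V → Fin d → ℕ
  inj : Function.Injective f
  col : V → Fin m
  S : Fin m → Fin m → ℕ → Prop
  symm : ∀ i j l, S i j l → S j i l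
  adj : ∀ u v : V, u ≠ v →
    (G.Adj u v ↔ S (col u) (col v) (d - prefLen (f u) (f v)))

/-- `G ∈ TM(d,m)`. -/
def InTM (d m : ℕ) {V : Type} (G : SimpleGraph V) : Prop :=
  Nonempty (TreeModel G d m)

section TD4
set_option linter.unusedSectionVars false
attribute [local instance] Classical.propDecidable
variable {V : Type} [Fintype V]

/-- strict ancestors -/
def sAnc (le : V → V → Prop) (v : V) : Set V := {y | le v y ∧ y ≠ v}

noncomputable def dep (le : V → V → Prop) (v : V) : ℕ := (sAnc le v).ncard

noncomputable def anc (le : V → V → Prop) (v : V) (k : ℕ) : V :=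
  if h : ∃ y, le v y ∧ dep le y = k then h.choose else v

variable {le : V → V → Prop} (hF : IsForestOrder le)
include hF

lemma sAnc_subset {x y : V} (hxy : le x y) : sAnc le y ⊆ sAnc le x := by
  rintro w ⟨hw, hwy⟩
  refine ⟨hF.2.1 _ _ _ hxy hw, ?_⟩
  rintro rfl
  exact hwy (hF.2.2.1 _ _ hxy hw)

lemma dep_lt {x y : V} (hxy : le x y) (hne : y ≠ x) : dep le y < dep le x := by
  refine Set.ncard_lt_ncard ⟨sAnc_subset hF hxy, fun hsub => ?_⟩ (Set.toFinite _)
  exact (hsub ⟨hxy, hne⟩).2 rfl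

lemma dep_le {x y : V} (hxy : le x y) : dep le y ≤ dep le x := by
  by_cases h : y = x
  · subst h; exact le_rfl
  · exact (dep_lt hF hxy h).le

lemma dep_inj {x y z : V} (hxy : le x y) (hxz : le x z) (hd : dep le y = dep le z) :
    y = z := by
  rcases hF.2.2.2 _ _ _ hxy hxz with h | h
  · by_contra hne
    exact absurd hd (dep_lt hF h (Ne.symm hne)).ne'
  · by_contra hne
    exact absurd hd.symm (dep_lt hF h hne).ne'

lemma exists_anc {x : V} {k : ℕ} (hk : k ≤ dep le x) : ∃ y, le x y ∧ dep le y = k := by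
  have hs : {y | le x y} = insert x (sAnc le x) := by
    ext y
    constructor
    · intro hy
      by_cases h : y = x
      · exact Or.inl h
      · exact Or.inr ⟨hy, h⟩
    · rintro (rfl | ⟨hy, _⟩)
      · exact hF.1 y
      · exact hy
  have hcard : ({y | le x y} : Set V).ncard = dep le x + 1 := by
    rw [hs, Set.ncard_insert_of_notMem (fun h => h.2 rfl) (Set.toFinite _)]
    rfl
  have hinj : Set.InjOn (dep le) {y | le x y} := fun a ha b hb hab => dep_inj hF ha hb hab
  have himg : dep le '' {y | le x y} ⊆ Set.Iic (dep le x) := by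
    rintro n ⟨y, hy, rfl⟩
    exact dep_le hF hy
  have hIic : (Set.Iic (dep le x)).ncard = dep le x + 1 := by
    rw [← Finset.coe_Iic, Set.ncard_coe_finset, Nat.card_Iic]
  have heq : dep le '' {y | le x y} = Set.Iic (dep le x) := by
    refine Set.eq_of_subset_of_ncard_le himg ?_ (Set.toFinite _)
    rw [hIic, Set.ncard_image_of_injOn hinj, hcard]
  have : k ∈ dep le '' {y | le x y} := heq ▸ (Set.mem_Iic.mpr hk)
  obtain ⟨y, hy, hdy⟩ := this
  exact ⟨y, hy, hdy⟩

lemma anc_spec {x : V} {k : ℕ} (hk : k ≤ dep le x) :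
    le x (anc le x k) ∧ dep le (anc le x k) = k := by
  have h := exists_anc hF hk
  rw [anc, dif_pos h]
  exact h.choose_spec

lemma anc_unique {x y : V} {k : ℕ} (hk : k ≤ dep le x) (hxy : le x y)
    (hd : dep le y = k) : anc le x k = y :=
  dep_inj hF (anc_spec hF hk).1 hxy (by rw [(anc_spec hF hk).2, hd])

lemma anc_self (x : V) : anc le x (dep le x) = x :=
  anc_unique hF le_rfl (hF.1 x) rfl

lemma anc_mono {u v : V} {k : ℕ} (huv : le u v) (hk : k ≤ dep le v) :
    anc le u k = anc le v k := by
  have hku : k ≤ dep le u := le_trans hk (dep_le hF huv)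
  exact anc_unique hF hku (hF.2.1 _ _ _ huv (anc_spec hF hk).1) (anc_spec hF hk).2

/-- leaf address of a vertex -/
noncomputable def fm (le : V → V → Prop) (ι : V → ℕ) (d : ℕ) (v : V) : Fin d → ℕ :=
  fun i => if (i : ℕ) ≤ dep le v then ι (anc le v (i : ℕ)) else 0

variable {ι : V → ℕ} {d : ℕ} (hι : Function.Injective ι) (hι1 : ∀ v, ι v ≠ 0)
  (hHt : ∀ x : V, dep le x + 1 ≤ d)
include hι hι1 hHt

lemma pref_comp {u v : V} (huv : le u v) (hne : u ≠ v) :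
    prefLen (fm le ι d u) (fm le ι d v) = dep le v + 1 := by
  have hdv : dep le v < dep le u := dep_lt hF huv (Ne.symm hne)
  have hdu : dep le u + 1 ≤ d := hHt u
  have hvd : dep le v + 1 < d := by omega
  simp only [prefLen]
  rw [Nat.findGreatest_eq_iff]
  refine ⟨by omega, fun _ => ?_, fun n hn hnd hP => ?_⟩
  · intro i hi
    have hi' : (i : ℕ) ≤ dep le v := by omega
    have hi'' : (i : ℕ) ≤ dep le u := by omega
    simp only [fm, if_pos hi', if_pos hi'']
    rw [anc_mono hF huv hi']
  · have := hP ⟨dep le v + 1, hvd⟩ (by simpa using by omega)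
    simp only [fm] at this
    rw [if_pos (by simpa using hdv), if_neg (by simp)] at this
    exact hι1 _ this

lemma pref_char :
    ∀ u v : V, (prefLen (fm le ι d u) (fm le ι d v) ≠ 0 →
        ∀ i : Fin d, (i : ℕ) < prefLen (fm le ι d u) (fm le ι d v) →
          fm le ι d u i = fm le ι d v i) ∧
      (∀ n, prefLen (fm le ι d u) (fm le ι d v) < n → n ≤ d →
        ¬ ∀ i : Fin d, (i : ℕ) < n → fm le ι d u i = fm le ι d v i) := by
  intro u v
  have h := Nat.findGreatest_eq_iff.mp
    (rfl : Nat.findGreatest (fun k => ∀ i : Fin d, (i : ℕ) < k →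
      fm le ι d u i = fm le ι d v i) d = prefLen (fm le ι d u) (fm le ι d v))
  exact ⟨fun h0 => h.2.1 h0, h.2.2⟩

/-- if `u` is not an ancestor of `v`, the common prefix is at most `dep u`. -/
lemma pref_le_dep₁ {u v : V} (hnc : ¬ le v u) :
    prefLen (fm le ι d u) (fm le ι d v) ≤ dep le u := by
  by_contra hlt
  push_neg at hlt
  have hP := (pref_char hF hι hι1 hHt u v).1 (by omega)
  have hdu : dep le u < d := by have := hHt u; omega
  have := hP ⟨dep le u, hdu⟩ (by simpa using hlt)
  simp only [fm] at this
  rw [if_pos (by simp), anc_self hF] at this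
  by_cases hc : dep le u ≤ dep le v
  · rw [if_pos (by simpa using hc)] at this
    have : u = anc le v (dep le u) := hι this
    exact hnc (this ▸ (anc_spec hF hc).1)
  · rw [if_neg (by simpa using hc)] at this
    exact hι1 _ this

lemma pref_le_dep₂ {u v : V} (hnc : ¬ le u v) :
    prefLen (fm le ι d u) (fm le ι d v) ≤ dep le v := by
  by_contra hlt
  push_neg at hlt
  have hP := (pref_char hF hι hι1 hHt u v).1 (by omega)
  have hdv : dep le v < d := by have := hHt v; omega
  have := hP ⟨dep le v, hdv⟩ (by simpa using hlt)
  simp only [fm] at this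
  rw [if_pos le_rfl, anc_self hF] at this
  by_cases hc : dep le v ≤ dep le u
  · rw [if_pos (by simpa using hc)] at this
    have : anc le u (dep le v) = v := hι this
    exact hnc (this ▸ (anc_spec hF hc).1)
  · rw [if_neg (by simpa using hc)] at this
    exact hι1 _ this.symm

lemma fm_inj : Function.Injective (fm le ι d) := by
  intro u v h
  by_contra hne
  have h1 : le u v := by
    have hdv : dep le v < d := by have := hHt v; omega
    have := congrFun h ⟨dep le v, hdv⟩
    simp only [fm] at this
    rw [if_pos le_rfl, anc_self hF] at this
    by_cases hc : dep le v ≤ dep le u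
    · rw [if_pos hc] at this
      have : anc le u (dep le v) = v := hι this
      exact this ▸ (anc_spec hF hc).1
    · rw [if_neg hc] at this
      exact absurd this.symm (hι1 _)
  have h2 : le v u := by
    have hdu : dep le u < d := by have := hHt u; omega
    have := congrFun h ⟨dep le u, hdu⟩
    simp only [fm] at this
    rw [if_pos le_rfl, anc_self hF] at this
    by_cases hc : dep le u ≤ dep le v
    · rw [if_pos hc] at this
      have : anc le v (dep le u) = u := hι this.symm
      exact this ▸ (anc_spec hF hc).1
    · rw [if_neg hc] at this
      exact absurd this (hι1 _)
  exact hne (hF.2.2.1 _ _ h1 h2)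

omit hF hι hι1 hHt in
lemma prefLen_comm (f g : Fin d → ℕ) : prefLen f g = prefLen g f := by
  simp only [prefLen]
  congr 1
  funext k
  exact propext ⟨fun h i hi => (h i hi).symm, fun h i hi => (h i hi).symm⟩

variable (G : SimpleGraph V)

noncomputable def enc (G : SimpleGraph V) (le : V → V → Prop) (d : ℕ) (v : V) :
    Fin d → Bool :=
  fun j => if (j : ℕ) < dep le v then decide (G.Adj v (anc le v (j : ℕ)))
           else decide ((j : ℕ) = dep le v)

lemma enc_dep {u v : V} (h : enc G le d u = enc G le d v) : dep le u = dep le v := by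
  by_contra hne
  rcases Nat.lt_or_ge (dep le u) (dep le v) with hlt | hge
  · have hdd : dep le v < d := by have := hHt v; omega
    have h2 := congrFun h ⟨dep le v, hdd⟩
    simp only [enc] at h2
    rw [if_neg (by simp; omega), if_neg (by simp)] at h2
    rw [decide_eq_decide] at h2
    simp at h2
    omega
  · have hlt : dep le v < dep le u := by omega
    have hdd : dep le u < d := by have := hHt u; omega
    have h2 := congrFun h ⟨dep le u, hdd⟩
    simp only [enc] at h2
    rw [if_neg (by simp), if_neg (by simp; omega)] at h2
    rw [decide_eq_decide] at h2
    simp at h2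
    omega

lemma enc_trace {u v : V} (h : enc G le d u = enc G le d v) {k : ℕ}
    (hk : k < dep le u) : (G.Adj u (anc le u k) ↔ G.Adj v (anc le v k)) := by
  have hdd := enc_dep hF hι hι1 hHt G h
  have hkd : k < d := by have := hHt u; omega
  have h2 := congrFun h ⟨k, hkd⟩
  simp only [enc] at h2
  rw [if_pos (show ((⟨k, hkd⟩ : Fin d) : ℕ) < dep le u from hk),
    if_pos (show ((⟨k, hkd⟩ : Fin d) : ℕ) < dep le v by show k < dep le v; omega)] at h2
  exact decide_eq_decide.mp h2

noncomputable def boolEquiv (d : ℕ) : (Fin d → Bool) ≃ Fin (2 ^ d) :=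
  Fintype.equivFinOfCardEq (by simp)

noncomputable def colF (G : SimpleGraph V) (le : V → V → Prop) (d : ℕ) : V → Fin (2 ^ d) :=
  fun v => boolEquiv d (enc G le d v)

omit hF hι hι1 hHt in
lemma colF_inj {u v : V} (h : colF G le d u = colF G le d v) :
    enc G le d u = enc G le d v := by
  simp only [colF] at h
  exact (boolEquiv d).injective h

def Sig (G : SimpleGraph V) (le : V → V → Prop) (d : ℕ) :
    Fin (2 ^ d) → Fin (2 ^ d) → ℕ → Prop :=
  fun i j ℓ =>
    (∃ u v : V, colF G le d u = i ∧ colF G le d v = j ∧ d = ℓ + dep le v + 1 ∧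
      le u v ∧ G.Adj u v) ∨
    (∃ u v : V, colF G le d u = j ∧ colF G le d v = i ∧ d = ℓ + dep le v + 1 ∧
      le u v ∧ G.Adj u v)

lemma sig_helper {u v : V} (hne : u ≠ v)
    (hx : ∃ u' v', colF G le d u' = colF G le d u ∧ colF G le d v' = colF G le d v ∧
      d = (d - prefLen (fm le ι d u) (fm le ι d v)) + dep le v' + 1 ∧
      le u' v' ∧ G.Adj u' v') :
    G.Adj u v := by
  obtain ⟨u', v', hcu, hcv, harith, hle', hadj'⟩ := hx
  have hencu := colF_inj G hcu
  have hencv := colF_inj G hcv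
  have hdu' : dep le u' = dep le u := enc_dep hF hι hι1 hHt G hencu
  have hdv' : dep le v' = dep le v := enc_dep hF hι hι1 hHt G hencv
  by_cases huv : le u v
  · have hk : dep le v < dep le u := dep_lt hF huv (Ne.symm hne)
    have hdle : dep le v ≤ dep le u' := by omega
    have hv' : anc le u' (dep le v) = v' := anc_unique hF hdle hle' hdv'
    have h1 : G.Adj u' (anc le u' (dep le v)) := hv' ▸ hadj'
    have h2 : G.Adj u (anc le u (dep le v)) :=
      (enc_trace hF hι hι1 hHt G hencu (by omega)).mp h1
    rwa [anc_unique hF hk.le huv rfl] at h2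
  · by_cases hvu : le v u
    · exfalso
      have hp : prefLen (fm le ι d u) (fm le ι d v) = dep le u + 1 := by
        rw [prefLen_comm]
        exact pref_comp hF hι hι1 hHt hvu (Ne.symm hne)
      have hk : dep le u < dep le v := dep_lt hF hvu hne
      have := hHt v
      omega
    · exfalso
      have h2 := pref_le_dep₂ hF hι hι1 hHt huv
      have := hHt v
      omega

lemma adj_iff (hAdjc : ∀ x y, G.Adj x y → le x y ∨ le y x) :
    ∀ u v : V, u ≠ v →
      (G.Adj u v ↔ Sig G le d (colF G le d u) (colF G le d v)
        (d - prefLen (fm le ι d u) (fm le ι d v))) := by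
  intro u v hne
  constructor
  · intro hadj
    rcases hAdjc u v hadj with huv | hvu
    · left
      refine ⟨u, v, rfl, rfl, ?_, huv, hadj⟩
      have hp := pref_comp hF hι hι1 hHt huv hne
      have h1 := hHt u
      have h2 := dep_lt hF huv (Ne.symm hne)
      omega
    · right
      refine ⟨v, u, rfl, rfl, ?_, hvu, hadj.symm⟩
      have hp : prefLen (fm le ι d u) (fm le ι d v) = dep le u + 1 := by
        rw [prefLen_comm]
        exact pref_comp hF hι hι1 hHt hvu (Ne.symm hne)
      have h1 := hHt v
      have h2 := dep_lt hF hvu hne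
      omega
  · rintro (hx | hx)
    · exact sig_helper hF hι hι1 hHt G hne hx
    · have : G.Adj v u := by
        refine sig_helper hF hι hι1 hHt G (Ne.symm hne) ?_
        obtain ⟨u', v', h1, h2, h3, h4, h5⟩ := hx
        refine ⟨u', v', h1, h2, ?_, h4, h5⟩
        rwa [prefLen_comm (fm le ι d v) (fm le ι d u)]
      exact this.symm

/-- shifted address map (dropping the root coordinate) -/
noncomputable def fm' (le : V → V → Prop) (ι : V → ℕ) (d : ℕ) (v : V) : Fin (d - 1) → ℕ :=
  fun i => fm le ι d v ⟨(i : ℕ) + 1, by have := i.isLt; omega⟩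

omit hF hι hι1 hHt in
lemma fm'_eq (w : V) (a : Fin d) (b : Fin (d - 1)) (hba : (b : ℕ) + 1 = (a : ℕ)) :
    fm' le ι d w b = fm le ι d w a := by
  simp only [fm']
  congr 1
  exact Fin.ext (by simpa using hba)

omit hι hι1 hHt in
lemma fm_zero (hroot : ∀ u v : V, anc le u 0 = anc le v 0) (u v : V) (i : Fin d)
    (hi : (i : ℕ) = 0) : fm le ι d u i = fm le ι d v i := by
  simp only [fm]
  rw [hi, if_pos (Nat.zero_le _), if_pos (Nat.zero_le _), hroot u v]

lemma pref_shift (hroot : ∀ u v : V, anc le u 0 = anc le v 0) (hd1 : 1 ≤ d)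
    {u v : V} (hne : u ≠ v) :
    (d - 1) - prefLen (fm' le ι d u) (fm' le ι d v)
      = d - prefLen (fm le ι d u) (fm le ι d v) := by
  set p := prefLen (fm le ι d u) (fm le ι d v) with hp
  have hp1 : 1 ≤ p :=
    Nat.le_findGreatest hd1 (fun i hi => fm_zero hF hroot u v i (by omega))
  have hchar := pref_char hF hι hι1 hHt u v
  have hplt : p < d := by
    by_contra hge
    push_neg at hge
    exact hne (fm_inj hF hι hι1 hHt (funext fun i =>
      hchar.1 (by omega) i (by have := i.isLt; omega)))
  have hgoal : prefLen (fm' le ι d u) (fm' le ι d v) = p - 1 := by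
    simp only [prefLen]
    rw [Nat.findGreatest_eq_iff]
    refine ⟨by omega, fun _ => ?_, fun n hn hnd hP => ?_⟩
    · intro i hi
      have ha : (i : ℕ) + 1 < d := by have := i.isLt; omega
      rw [fm'_eq u ⟨(i : ℕ) + 1, ha⟩ i rfl, fm'_eq v ⟨(i : ℕ) + 1, ha⟩ i rfl]
      exact hchar.1 (by omega) _ (by show (i : ℕ) + 1 < p; omega)
    · refine hchar.2 (n + 1) (by omega) (by omega) ?_
      intro i hi
      by_cases hz : (i : ℕ) = 0
      · exact fm_zero hF hroot u v i hz
      · have hj : (i : ℕ) - 1 < d - 1 := by have := i.isLt; omega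
        have hb : ((⟨(i : ℕ) - 1, hj⟩ : Fin (d - 1)) : ℕ) + 1 = (i : ℕ) := by
          show (i : ℕ) - 1 + 1 = (i : ℕ); omega
        rw [← fm'_eq u i ⟨(i : ℕ) - 1, hj⟩ hb, ← fm'_eq v i ⟨(i : ℕ) - 1, hj⟩ hb]
        exact hP _ (by show (i : ℕ) - 1 < n; omega)
  rw [hgoal]
  omega

lemma fm'_inj (hroot : ∀ u v : V, anc le u 0 = anc le v 0) :
    Function.Injective (fm' le ι d) := by
  intro u v hfm
  apply fm_inj hF hι hι1 hHt
  funext i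
  by_cases hz : (i : ℕ) = 0
  · exact fm_zero hF hroot u v i hz
  · have hj : (i : ℕ) - 1 < d - 1 := by have := i.isLt; omega
    have hb : ((⟨(i : ℕ) - 1, hj⟩ : Fin (d - 1)) : ℕ) + 1 = (i : ℕ) := by
      show (i : ℕ) - 1 + 1 = (i : ℕ); omega
    rw [← fm'_eq u i ⟨(i : ℕ) - 1, hj⟩ hb, ← fm'_eq v i ⟨(i : ℕ) - 1, hj⟩ hb]
    exact congrFun hfm _

end TD4

/-- If `G` has tree-depth `d`, then `G ∈ TM(d, 2^d)`; if moreover `G` is connected,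
then `G ∈ TM(d−1, 2^d)`. -/
theorem stmt_4 {V : Type} [Fintype V] (G : SimpleGraph V) (d : ℕ)
    (h : treeDepth G = d) :
    InTM d (2 ^ d) G ∧ (G.Connected → InTM (d - 1) (2 ^ d) G) := by
  classical
  obtain ⟨n, ⟨e⟩⟩ := Finite.exists_equiv_fin V
  have hmem : Fintype.card V ∈ { n : ℕ | ∃ le : V → V → Prop, IsForestOrder le ∧
      (∀ x y, G.Adj x y → (le x y ∨ le y x)) ∧
      (∀ x : V, ({y : V | le x y ∧ y ≠ x}).ncard + 1 ≤ n) } := by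
    refine ⟨fun x y => e x ≤ e y,
      ⟨fun x => le_rfl, fun x y z => le_trans,
        fun x y hxy hyx => e.injective (le_antisymm hxy hyx),
        fun x y z _ _ => le_total _ _⟩,
      fun x y _ => le_total _ _, fun x => ?_⟩
    have hx : x ∉ {y : V | e x ≤ e y ∧ y ≠ x} := fun hc => hc.2 rfl
    have hss : {y : V | e x ≤ e y ∧ y ≠ x} ⊂ Set.univ :=
      Set.ssubset_univ_iff.mpr (fun hc => hx (hc ▸ Set.mem_univ x))
    have hlt := Set.ncard_lt_ncard hss (Set.toFinite _)
    rw [Set.ncard_univ, Nat.card_eq_fintype_card] at hlt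
    show ({y : V | e x ≤ e y ∧ y ≠ x}).ncard + 1 ≤ Fintype.card V
    omega
  have hd : d ∈ { n : ℕ | ∃ le : V → V → Prop, IsForestOrder le ∧
      (∀ x y, G.Adj x y → (le x y ∨ le y x)) ∧
      (∀ x : V, ({y : V | le x y ∧ y ≠ x}).ncard + 1 ≤ n) } := by
    rw [← h]
    exact Nat.sInf_mem ⟨_, hmem⟩
  obtain ⟨le, hF, hAdjc, hHt0⟩ := hd
  have hHt : ∀ x : V, dep le x + 1 ≤ d := hHt0
  set ι : V → ℕ := fun v => (e v : ℕ) + 1 with hι_def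
  have hι : Function.Injective ι := by
    intro a b hab
    apply e.injective
    exact Fin.ext (by simpa [ι] using hab)
  have hι1 : ∀ v, ι v ≠ 0 := fun v => by simp [ι]
  constructor
  · exact ⟨⟨fm le ι d, fm_inj hF hι hι1 hHt, colF G le d, Sig G le d,
      fun i j l hl => hl.symm, adj_iff hF hι hι1 hHt G hAdjc⟩⟩
  · intro hconn
    obtain ⟨x⟩ := hconn.nonempty
    have hd1 : 1 ≤ d := by have := hHt x; omega
    have hroot : ∀ u v : V, anc le u 0 = anc le v 0 := by
      have step : ∀ u v : V, G.Adj u v → anc le u 0 = anc le v 0 := by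
        intro u v huv
        rcases hAdjc u v huv with h1 | h1
        · exact anc_mono hF h1 (Nat.zero_le _)
        · exact (anc_mono hF h1 (Nat.zero_le _)).symm
      intro u v
      obtain ⟨w⟩ := hconn.preconnected u v
      induction w with
      | nil => rfl
      | cons hadj p ih => exact (step _ _ hadj).trans ih
    refine ⟨⟨fm' le ι d, fm'_inj hF hι hι1 hHt hroot, colF G le d, Sig G le d,
      fun i j l hl => hl.symm, ?_⟩⟩
    intro u v hne
    rw [pref_shift hF hι hι1 hHt hroot hd1 hne]
    exact adj_iff hF hι hι1 hHt G hAdjc u v hne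
end

section
/- If a graph G is in TM(d,m), then G has linear clique-width at most m(d+1). -/
/-- Linear `k`-expressions, operationally: `LinCW k n G lab` holds if the labelled graph
`(G, lab)` on vertex set `Fin n` can be built from single labelled vertices by repeatedly
(i) adding a single new labelled vertex (linear disjoint union), (ii) adding all edges
between two distinct labels, and (iii) relabelling. -/
inductive LinCW (k : ℕ) : (n : ℕ) → SimpleGraph (Fin n) → (Fin n → Fin k) → Prop
  | empty : LinCW k 0 ⊥ Fin.elim0
  | single (ℓ : Fin k) : LinCW k 1 ⊥ (fun _ => ℓ)
  | addVertex {n : ℕ} {G : SimpleGraph (Fin n)} {lab : Fin n → Fin k} (ℓ : Fin k) :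
      LinCW k n G lab →
      LinCW k (n + 1) (G.map Fin.castSucc) (Fin.snoc lab ℓ)
  | addEdges {n : ℕ} {G : SimpleGraph (Fin n)} {lab : Fin n → Fin k} (i j : Fin k)
      (hij : i ≠ j) : LinCW k n G lab →
      LinCW k n (G ⊔ SimpleGraph.fromRel (fun x y => lab x = i ∧ lab y = j)) lab
  | relabel {n : ℕ} {G : SimpleGraph (Fin n)} {lab : Fin n → Fin k} (i j : Fin k) :
      LinCW k n G lab →
      LinCW k n G (fun v => if lab v = i then j else lab v)

/-- `G` has linear clique-width at most `k`. -/
def LinCWle {V : Type} (G : SimpleGraph V) (k : ℕ) : Prop :=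
  ∃ (n : ℕ) (G' : SimpleGraph (Fin n)) (lab : Fin n → Fin k),
    LinCW k n G' lab ∧ Nonempty (G ≃g G')


namespace StmtAux
open SimpleGraph

variable {d m : ℕ}

lemma prefLen_le (f g : Fin d → ℕ) : prefLen f g ≤ d := Nat.findGreatest_le d

lemma prefLen_prop (f g : Fin d → ℕ) : ∀ i : Fin d, (i : ℕ) < prefLen f g → f i = g i :=
  Nat.findGreatest_spec (P := fun k => ∀ i : Fin d, (i : ℕ) < k → f i = g i)
    (Nat.zero_le d) (by intro i h; exact absurd h (Nat.not_lt_zero _))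

lemma le_prefLen (f g : Fin d → ℕ) {k : ℕ} (hk : k ≤ d)
    (h : ∀ i : Fin d, (i : ℕ) < k → f i = g i) : k ≤ prefLen f g :=
  Nat.le_findGreatest hk h

lemma prefLen_self (f : Fin d → ℕ) : prefLen f f = d :=
  le_antisymm (prefLen_le f f) (le_prefLen f f le_rfl (fun _ _ => rfl))

lemma prefLen_comm (f g : Fin d → ℕ) : prefLen f g = prefLen g f := by
  apply le_antisymm
  · exact le_prefLen g f (prefLen_le f g) (fun i h => (prefLen_prop f g i h).symm)
  · exact le_prefLen f g (prefLen_le g f) (fun i h => (prefLen_prop g f i h).symm)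

lemma eq_of_prefLen_eq {f g : Fin d → ℕ} (h : prefLen f g = d) : f = g :=
  funext fun i => prefLen_prop f g i (h.symm ▸ i.isLt)

lemma prefLen_lt {f g : Fin d → ℕ} (h : f ≠ g) : prefLen f g < d :=
  lt_of_le_of_ne (prefLen_le f g) (fun e => h (eq_of_prefLen_eq e))

/-- weak lex order -/
def LexW (a b : Fin d → ℕ) : Prop := Pi.Lex (·<·) (·<·) a b ∨ a = b

lemma lex_char {a b : Fin d → ℕ} (h : Pi.Lex (·<·) (·<·) a b) :
    prefLen a b < d ∧ ∀ hh : prefLen a b < d, a ⟨prefLen a b, hh⟩ < b ⟨prefLen a b, hh⟩ := by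
  obtain ⟨i, hlt, hi⟩ := h
  have h1 : (i : ℕ) ≤ prefLen a b := le_prefLen a b (le_of_lt i.isLt)
    (fun j hj => hlt j (by exact hj))
  have h2 : prefLen a b ≤ (i : ℕ) := by
    by_contra hc
    push_neg at hc
    exact absurd (prefLen_prop a b i hc) (ne_of_lt hi)
  have he : prefLen a b = (i : ℕ) := le_antisymm h2 h1
  refine ⟨he ▸ i.isLt, fun hh => ?_⟩
  have : (⟨prefLen a b, hh⟩ : Fin d) = i := by ext; exact he
  rw [this]; exact hi

lemma prefLen_min {a b c : Fin d → ℕ} (hab : LexW a b) (hbc : LexW b c) :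
    prefLen a c = min (prefLen a b) (prefLen b c) := by
  rcases hab with hab | rfl
  · rcases hbc with hbc | rfl
    · obtain ⟨hpd, hp⟩ := lex_char hab
      obtain ⟨hqd, hq⟩ := lex_char hbc
      set p := prefLen a b with hpdef
      set q := prefLen b c with hqdef
      set t := min p q with htdef
      have htd : t < d := lt_of_le_of_lt (min_le_left _ _) hpd
      have hagree : ∀ i : Fin d, (i : ℕ) < t → a i = c i := by
        intro i hi
        have h1 := prefLen_prop a b i (lt_of_lt_of_le hi (min_le_left _ _))
        have h2 := prefLen_prop b c i (lt_of_lt_of_le hi (min_le_right _ _))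
        exact h1.trans h2
      have hne : a ⟨t, htd⟩ < c ⟨t, htd⟩ := by
        rcases lt_trichotomy p q with h | h | h
        · have ht : t = p := min_eq_left (le_of_lt h)
          have hb : b ⟨t, htd⟩ = c ⟨t, htd⟩ :=
            prefLen_prop b c _ (by simp only [Fin.val_mk]; omega)
          have := hp (by omega)
          rw [← hb]
          simpa using (by convert this using 2 <;> simp [ht])
        · have ht : t = p := by simp [htdef, h]
          have h1 : a ⟨t, htd⟩ < b ⟨t, htd⟩ := by
            have := hp (by omega); convert this using 2 <;> simp [ht]
          have h2 : b ⟨t, htd⟩ < c ⟨t, htd⟩ := by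
            have := hq (by omega); convert this using 2 <;> simp [ht, ← h]
          exact h1.trans h2
        · have ht : t = q := min_eq_right (le_of_lt h)
          have ha : a ⟨t, htd⟩ = b ⟨t, htd⟩ :=
            prefLen_prop a b _ (by simp only [Fin.val_mk]; omega)
          have h2 : b ⟨t, htd⟩ < c ⟨t, htd⟩ := by
            have := hq (by omega); convert this using 2 <;> simp [ht]
          rw [ha]; exact h2
      apply le_antisymm
      · by_contra hc2
        push_neg at hc2
        exact absurd (prefLen_prop a c ⟨t, htd⟩ hc2) (ne_of_lt hne)
      · exact le_prefLen a c (le_of_lt htd) hagree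
    · rw [prefLen_self, min_eq_left (prefLen_le a b)]
  · rw [prefLen_self, min_eq_right (prefLen_le a c)]

lemma lab_congr {k n : ℕ} {G : SimpleGraph (Fin n)} {lab lab' : Fin n → Fin k}
    (h : LinCW k n G lab) (e : lab = lab') : LinCW k n G lab' := e ▸ h

lemma graph_congr {k n : ℕ} {G G' : SimpleGraph (Fin n)} {lab : Fin n → Fin k}
    (h : LinCW k n G lab) (e : G = G') : LinCW k n G' lab := e ▸ h

lemma relabel_many {k n : ℕ} {G : SimpleGraph (Fin n)} {lab : Fin n → Fin k}
    (r : Fin k → Fin k) (hr : ∀ i, r (r i) = r i) (h : LinCW k n G lab) :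
    LinCW k n G (r ∘ lab) := by
  classical
  suffices H : ∀ s : Finset (Fin k),
      LinCW k n G (fun v => if lab v ∈ s then r (lab v) else lab v) by
    have := H Finset.univ
    apply lab_congr this
    funext v; simp
  intro s
  induction s using Finset.induction with
  | empty => apply lab_congr h; funext v; simp
  | @insert a s ha ih =>
    apply lab_congr (LinCW.relabel a (r a) ih)
    funext v
    by_cases h1 : lab v ∈ s
    · rw [if_pos h1, if_pos (Finset.mem_insert_of_mem h1)]
      by_cases h2 : r (lab v) = a
      · rw [if_pos h2, ← h2, hr]
      · rw [if_neg h2]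
    · rw [if_neg h1]
      by_cases h2 : lab v = a
      · rw [if_pos h2, if_pos (by rw [h2]; exact Finset.mem_insert_self a s), h2]
      · rw [if_neg h2, if_neg (by simp [Finset.mem_insert, h1, h2])]

lemma addEdges_many {k n : ℕ} {G : SimpleGraph (Fin n)} {lab : Fin n → Fin k}
    (ℓ : Fin k) (T : Finset (Fin k)) (hT : ∀ i ∈ T, i ≠ ℓ) (h : LinCW k n G lab) :
    LinCW k n (G ⊔ SimpleGraph.fromRel (fun x y => lab x ∈ T ∧ lab y = ℓ)) lab := by
  classical
  revert hT
  induction T using Finset.induction with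
  | empty =>
    intro _
    apply graph_congr h
    ext u v
    simp [SimpleGraph.fromRel_adj]
  | @insert a T ha ih =>
    intro hT
    have h1 := ih (fun i hi => hT i (Finset.mem_insert_of_mem hi))
    have h2 := LinCW.addEdges (lab := lab) a ℓ (hT a (Finset.mem_insert_self a _)) h1
    apply graph_congr h2
    ext u v
    simp only [SimpleGraph.sup_adj, SimpleGraph.fromRel_adj, Finset.mem_insert]
    tauto

/-- label encoding -/
def enc (c : Fin m) (j : Fin (d + 1)) : Fin (m * (d + 1)) := finProdFinEquiv (c, j)

lemma enc_inj {c c' : Fin m} {j j' : Fin (d + 1)} (h : enc c j = enc c' j') :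
    c = c' ∧ j = j' := by
  have := finProdFinEquiv.injective h
  exact ⟨congrArg Prod.fst this, congrArg Prod.snd this⟩

def lev (g h : Fin d → ℕ) : Fin (d + 1) := ⟨prefLen g h, Nat.lt_succ_of_le (prefLen_le g h)⟩

/-- the graph defined by a tree model -/
def mG (S : Fin m → Fin m → ℕ → Prop) (hS : ∀ i j l, S i j l → S j i l)
    {n : ℕ} (f : Fin n → Fin d → ℕ) (col : Fin n → Fin m) : SimpleGraph (Fin n) where
  Adj u v := u ≠ v ∧ S (col u) (col v) (d - prefLen (f u) (f v))
  symm := by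
    constructor
    rintro u v ⟨h1, h2⟩
    exact ⟨h1.symm, by rw [prefLen_comm]; exact hS _ _ _ h2⟩
  loopless := ⟨fun u h => h.1 rfl⟩

def rmap (p : ℕ) (hp : p < d + 1) : Fin (m * (d + 1)) → Fin (m * (d + 1)) := fun i =>
  enc (finProdFinEquiv.symm i).1
    ⟨min ((finProdFinEquiv.symm i).2 : ℕ) p, lt_of_le_of_lt (min_le_right _ _) hp⟩

lemma rmap_enc (p : ℕ) (hp : p < d + 1) (c : Fin m) (j : Fin (d + 1)) :
    rmap p hp (enc c j) = enc c ⟨min (j : ℕ) p, lt_of_le_of_lt (min_le_right _ _) hp⟩ := by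
  simp only [rmap, enc, Equiv.symm_apply_apply]

lemma rmap_idem (p : ℕ) (hp : p < d + 1) (i : Fin (m * (d + 1))) :
    rmap p hp (rmap p hp i) = rmap p hp i := by
  have hi : i = enc (finProdFinEquiv.symm i).1 (finProdFinEquiv.symm i).2 :=
    (finProdFinEquiv.apply_symm_apply i).symm
  rw [hi, rmap_enc p hp, rmap_enc p hp]
  refine congrArg _ (Fin.ext ?_)
  show min (min _ p) p = min _ p
  omega

lemma key (d m : ℕ) (S : Fin m → Fin m → ℕ → Prop) (hS : ∀ i j l, S i j l → S j i l) :
    ∀ (n : ℕ) (f : Fin (n + 1) → Fin d → ℕ), Function.Injective f →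
    (∀ i j : Fin (n + 1), i ≤ j → LexW (f i) (f j)) →
    ∀ col : Fin (n + 1) → Fin m,
    LinCW (m * (d + 1)) (n + 1) (mG S hS f col)
      (fun v => enc (col v) (lev (f v) (f (Fin.last n)))) := by
  intro n
  induction n with
  | zero =>
    intro f inj mono col
    haveI : Subsingleton (Fin (0 + 1)) := ⟨fun a b => Fin.ext (by omega)⟩
    have hG : mG S hS f col = ⊥ := by
      ext u v
      simp only [mG, SimpleGraph.bot_adj, iff_false]
      rintro ⟨h1, -⟩
      exact h1 (Subsingleton.elim u v)
    have hlab : (fun v : Fin 1 => enc (col v) (lev (f v) (f (Fin.last 0))))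
        = fun _ => enc (col 0) (lev (f 0) (f (Fin.last 0))) := by
      funext v; rw [Subsingleton.elim v 0]
    rw [hG, hlab]
    exact LinCW.single _
  | succ k IH =>
    intro f inj mono col
    classical
    set L : Fin (k + 2) := Fin.last (k + 1) with hL
    set f' : Fin (k + 1) → Fin d → ℕ := f ∘ Fin.castSucc with hf'
    set col' : Fin (k + 1) → Fin m := col ∘ Fin.castSucc with hcol'
    have inj' : Function.Injective f' := inj.comp (Fin.castSucc_injective _)
    have mono' : ∀ i j : Fin (k + 1), i ≤ j → LexW (f' i) (f' j) := fun i j hij =>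
      mono _ _ (Fin.castSucc_le_castSucc_iff.mpr hij)
    have D := IH f' inj' mono' col'
    set p : ℕ := prefLen (f (Fin.castSucc (Fin.last k))) (f L) with hpdef
    have hp : p < d + 1 := Nat.lt_succ_of_le (prefLen_le _ _)
    have D2 := relabel_many (rmap p hp) (rmap_idem p hp) D
    have hlab2 : (rmap p hp) ∘ (fun v => enc (col' v) (lev (f' v) (f' (Fin.last k))))
        = fun v : Fin (k + 1) => enc (col' v) (lev (f' v) (f L)) := by
      funext v
      show rmap p hp (enc (col' v) (lev (f' v) (f' (Fin.last k)))) = _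
      rw [rmap_enc]
      refine congrArg _ (Fin.ext ?_)
      show min (prefLen (f' v) (f' (Fin.last k))) p = prefLen (f' v) (f L)
      exact (prefLen_min (a := f' v) (b := f' (Fin.last k)) (c := f L)
        (mono' v (Fin.last k) (Fin.le_last v))
        (mono (Fin.castSucc (Fin.last k)) L (Fin.le_last _))).symm
    have D3 := lab_congr D2 hlab2
    set ℓ : Fin (m * (d + 1)) := enc (col L) ⟨d, Nat.lt_succ_self d⟩ with hℓ
    have D4 := LinCW.addVertex ℓ D3
    set lab3 : Fin (k + 2) → Fin (m * (d + 1)) :=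
      fun v => enc (col v) (lev (f v) (f L)) with hlab3
    have hsnoc : (Fin.snoc (fun v : Fin (k + 1) => enc (col' v) (lev (f' v) (f L))) ℓ) = lab3 := by
      funext v
      refine Fin.lastCases ?_ ?_ v
      · rw [Fin.snoc_last]
        simp only [hlab3, hℓ]
        congr 1
        ext
        simp [lev, prefLen_self, hL]
      · intro w
        rw [Fin.snoc_castSucc]
        rfl
    have D5 := lab_congr D4 hsnoc
    set T : Finset (Fin (m * (d + 1))) := Finset.univ.filter (fun i =>
      ((finProdFinEquiv.symm i).2 : ℕ) < d ∧
      S (finProdFinEquiv.symm i).1 (col L) (d - ((finProdFinEquiv.symm i).2 : ℕ))) with hT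
    have hTne : ∀ i ∈ T, i ≠ ℓ := by
      intro i hi
      rw [hT, Finset.mem_filter] at hi
      intro he
      rw [he, hℓ] at hi
      simp [enc, Equiv.symm_apply_apply] at hi
    have D6 := addEdges_many ℓ T hTne D5
    apply graph_congr D6
    have memT : ∀ x : Fin (k + 2), (lab3 x ∈ T ↔
        (prefLen (f x) (f L) < d ∧ S (col x) (col L) (d - prefLen (f x) (f L)))) := by
      intro x
      rw [hT, Finset.mem_filter]
      simp [hlab3, enc, Equiv.symm_apply_apply, lev]
    have eqℓ : ∀ x : Fin (k + 2), (lab3 x = ℓ ↔ x = L) := by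
      intro x
      constructor
      · intro he
        obtain ⟨h1, h2⟩ := enc_inj he
        have : prefLen (f x) (f L) = d := congrArg Fin.val h2
        exact inj (eq_of_prefLen_eq this)
      · rintro rfl
        simp only [hlab3, hℓ]
        congr 1
        ext
        simp [lev, prefLen_self]
    ext u v
    simp only [SimpleGraph.sup_adj, SimpleGraph.map_adj, SimpleGraph.fromRel_adj]
    constructor
    · rintro (⟨-, u', v', ⟨hne, hs⟩, rfl, rfl⟩ | ⟨hne, ⟨h1, h2⟩ | ⟨h1, h2⟩⟩)
      · exact ⟨fun he => hne (Fin.castSucc_injective _ he), hs⟩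
      · rw [eqℓ] at h2
        subst h2
        rw [memT] at h1
        exact ⟨hne, h1.2⟩
      · rw [eqℓ] at h2
        subst h2
        rw [memT] at h1
        refine ⟨hne, ?_⟩
        rw [prefLen_comm]
        exact hS _ _ _ h1.2
    · rintro ⟨hne, hadj⟩
      rcases eq_or_ne v L with rfl | hv
      · refine Or.inr ⟨hne, Or.inl ⟨?_, (eqℓ L).mpr rfl⟩⟩
        rw [memT]
        exact ⟨prefLen_lt (fun he => hne (inj he)), hadj⟩
      · rcases eq_or_ne u L with rfl | hu
        · refine Or.inr ⟨hne, Or.inr ⟨?_, (eqℓ L).mpr rfl⟩⟩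
          rw [memT]
          refine ⟨prefLen_lt (fun he => hne (inj he).symm), ?_⟩
          rw [prefLen_comm]
          exact hS _ _ _ hadj
        · obtain ⟨u', rfl⟩ := Fin.exists_castSucc_eq.mpr hu
          obtain ⟨v', rfl⟩ := Fin.exists_castSucc_eq.mpr hv
          exact Or.inl ⟨hne, u', v',
            ⟨fun he => hne (congrArg Fin.castSucc he), hadj⟩, rfl, rfl⟩

end StmtAux

/-- Every graph in `TM(d,m)` has linear clique-width at most `m(d+1)`. -/
theorem stmt_8 (d m : ℕ) {V : Type} [Fintype V] (G : SimpleGraph V)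
    (h : InTM d m G) : LinCWle G (m * (d + 1)) := by
  classical
  obtain ⟨tm⟩ := h
  rcases isEmpty_or_nonempty V with hV | hV
  · refine ⟨0, ⊥, Fin.elim0, LinCW.empty, ⟨⟨Equiv.equivOfIsEmpty V (Fin 0), ?_⟩⟩⟩
    intro a b
    exact isEmptyElim a
  · set rel : V → V → Prop := fun a b => Pi.Lex (· < ·) (· < ·) (tm.f a) (tm.f b) with hrel
    have tri : ∀ a b : V, rel a b ∨ a = b ∨ rel b a := by
      intro a b
      have htri := (Pi.isTrichotomous_lex (β := fun _ : Fin d => ℕ) (· < ·) (· < ·)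
          (IsWellFounded.wf)).trichotomous (tm.f a) (tm.f b)
      by_cases h1 : rel a b
      · exact Or.inl h1
      by_cases h2 : rel b a
      · exact Or.inr (Or.inr h2)
      exact Or.inr (Or.inl (tm.inj (htri h1 h2)))
    haveI hSTO : IsStrictTotalOrder V rel :=
      { trichotomous := fun a b h1 h2 => ((tri a b).resolve_left h1).resolve_right h2
        irrefl := fun a ⟨k, _, hk⟩ => lt_irrefl _ hk
        trans := by
          rintro a b c ⟨N₁, lt_N₁, a_lt_b⟩ ⟨N₂, lt_N₂, b_lt_c⟩
          rcases lt_trichotomy N₁ N₂ with (H | rfl | H)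
          exacts [⟨N₁, fun j hj => (lt_N₁ _ hj).trans (lt_N₂ _ <| hj.trans H), lt_N₂ _ H ▸ a_lt_b⟩,
            ⟨N₁, fun j hj => (lt_N₁ _ hj).trans (lt_N₂ _ hj), a_lt_b.trans b_lt_c⟩,
            ⟨N₂, fun j hj => (lt_N₁ _ (hj.trans H)).trans (lt_N₂ _ hj),
              (lt_N₁ _ H).symm ▸ b_lt_c⟩] }
    letI : LinearOrder V := @linearOrderOfSTO V rel hSTO (Classical.decRel _)
    obtain ⟨k, hk⟩ : ∃ k, Fintype.card V = k + 1 :=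
      ⟨Fintype.card V - 1, by have := Fintype.card_pos (α := V); omega⟩
    let e : Fin (k + 1) ≃o V := monoEquivOfFin V hk
    set F : Fin (k + 1) → Fin d → ℕ := fun i => tm.f (e i) with hF
    have injF : Function.Injective F :=
      fun a b hab => e.injective (tm.inj hab)
    have monoF : ∀ i j : Fin (k + 1), i ≤ j → StmtAux.LexW (F i) (F j) := by
      intro i j hij
      rcases eq_or_ne (e i) (e j) with he | he
      · exact Or.inr (congrArg tm.f he)
      · left
        have hlt : (e i : V) < e j := lt_of_le_of_ne (e.monotone hij) he
        exact hlt
    have D := StmtAux.key d m tm.S tm.symm k F injF monoF (fun i => tm.col (e i))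
    refine ⟨k + 1, _, _, D, ⟨⟨e.symm.toEquiv, ?_⟩⟩⟩
    intro a b
    show (StmtAux.mG tm.S tm.symm F _).Adj (e.symm a) (e.symm b) ↔ G.Adj a b
    constructor
    · rintro ⟨hne, hs⟩
      have hab : a ≠ b := fun he => hne (congrArg e.symm he)
      rw [tm.adj a b hab]
      simpa [hF, OrderIso.apply_symm_apply] using hs
    · intro hadj
      have hab : a ≠ b := G.ne_of_adj hadj
      refine ⟨fun he => hab (by simpa using congrArg e he), ?_⟩
      have := (tm.adj a b hab).mp hadj
      simpa [hF, OrderIso.apply_symm_apply] using this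
end

section
/- For every k, SC(k) ⊆ TM(k, 2^k): every graph of SC-depth at most k has a tree-model with 2^k colours and depth k. -/
lemma prefLen_le {d : ℕ} (f g : Fin d → ℕ) : prefLen f g ≤ d :=
  Nat.findGreatest_le d

lemma prefLen_spec {d : ℕ} (f g : Fin d → ℕ) :
    ∀ i : Fin d, (i : ℕ) < prefLen f g → f i = g i := by
  have := Nat.findGreatest_spec (P := fun k => ∀ i : Fin d, (i : ℕ) < k → f i = g i)
    (Nat.zero_le d) (fun i hi => absurd hi (Nat.not_lt_zero _))
  exact this

lemma prefLen_eq_of {d : ℕ} (f g : Fin d → ℕ) (t : ℕ) (ht : t ≤ d)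
    (h1 : ∀ i : Fin d, (i : ℕ) < t → f i = g i)
    (h2 : ∀ hlt : t < d, f ⟨t, hlt⟩ ≠ g ⟨t, hlt⟩) :
    prefLen f g = t := by
  rw [prefLen, Nat.findGreatest_eq_iff]
  refine ⟨ht, fun _ => h1, fun n hn hnd hP => ?_⟩
  have hlt : t < d := lt_of_lt_of_le hn hnd
  exact h2 hlt (hP ⟨t, hlt⟩ hn)

lemma prefLen_lt_spec {d : ℕ} (f g : Fin d → ℕ) (h : prefLen f g < d) :
    f ⟨prefLen f g, h⟩ ≠ g ⟨prefLen f g, h⟩ := by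
  intro heq
  have hP : ∀ i : Fin d, (i : ℕ) < prefLen f g + 1 → f i = g i := by
    intro i hi
    rcases Nat.lt_succ_iff_lt_or_eq.mp hi with h' | h'
    · exact prefLen_spec f g i h'
    · have : i = ⟨prefLen f g, h⟩ := Fin.ext h'
      rw [this]; exact heq
  have h1 := Nat.le_findGreatest (P := fun k => ∀ i : Fin d, (i : ℕ) < k → f i = g i)
    (by omega : prefLen f g + 1 ≤ d) hP
  have h2 : prefLen f g + 1 ≤ prefLen f g := h1
  omega


lemma card_cons_filter0 {k : ℕ} (a b : Bool) (c d : Fin k → Bool) :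
    ((Finset.univ.filter (fun j : Fin (k+1) =>
      (j : ℕ) ≤ 0 ∧ Fin.cons (α := fun _ => Bool) a c j = true ∧ Fin.cons (α := fun _ => Bool) b d j = true)).card)
    = (if a = true ∧ b = true then 1 else 0) := by
  rw [Finset.card_filter, Fin.sum_univ_succ]
  simp

lemma card_cons_filter {k : ℕ} (t : ℕ) (a b : Bool) (c d : Fin k → Bool) :
    ((Finset.univ.filter (fun j : Fin (k+1) =>
      (j : ℕ) ≤ t + 1 ∧ Fin.cons (α := fun _ => Bool) a c j = true ∧ Fin.cons (α := fun _ => Bool) b d j = true)).card)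
    = (if a = true ∧ b = true then 1 else 0)
      + ((Finset.univ.filter (fun j : Fin k =>
          (j : ℕ) ≤ t ∧ c j = true ∧ d j = true)).card) := by
  rw [Finset.card_filter, Fin.sum_univ_succ, Finset.card_filter]
  congr 1
  · simp
  · apply Finset.sum_congr rfl
    intro j _
    simp [Fin.cons_succ, Nat.succ_le_succ_iff]

/-- The graph obtained from `G` by complementing the edges on the set `X`. -/
def scFlip {V : Type} (G : SimpleGraph V) (X : Set V) : SimpleGraph V :=
  SimpleGraph.fromRel (fun x y =>
    (x ∈ X ∧ y ∈ X ∧ ¬ G.Adj x y) ∨ ((x ∉ X ∨ y ∉ X) ∧ G.Adj x y))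

/-- `InSCAux n V G` holds iff `G ∈ SC(n)`: `SC 0 = {K₁}`, and `SC (n+1)` consists of
subset-complementations (on an arbitrary set `X`) of disjoint unions of graphs in `SC n`. -/
def InSCAux : ℕ → (V : Type) → SimpleGraph V → Prop
  | 0, V, _ => Nonempty V ∧ Subsingleton V
  | n+1, V, G =>
    ∃ (p : ℕ) (π : V → Fin p) (H : SimpleGraph V) (X : Set V),
      (∀ x y, H.Adj x y → π x = π y) ∧
      (∀ i : Fin p, InSCAux n _ (H.induce (π ⁻¹' {i}))) ∧
      G = scFlip H X

/-- `G ∈ SC(n)` (graphs of SC-depth at most `n`). -/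
def InSC (n : ℕ) {V : Type} (G : SimpleGraph V) : Prop := InSCAux n V G

lemma key : ∀ (k : ℕ) (V : Type) (G : SimpleGraph V), InSCAux k V G →
    ∃ (f : V → Fin k → ℕ) (col : V → Fin k → Bool),
      Function.Injective f ∧
      ∀ u v : V, G.Adj u v ↔ u ≠ v ∧
        Odd ((Finset.univ.filter (fun j : Fin k =>
          (j : ℕ) ≤ prefLen (f u) (f v) ∧ col u j = true ∧ col v j = true)).card) := by
  intro k
  induction k with
  | zero =>
    rintro V G ⟨_, hsub⟩
    refine ⟨fun _ i => i.elim0, fun _ i => i.elim0, fun a b _ => Subsingleton.elim a b, ?_⟩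
    intro u v
    constructor
    · intro h; exact absurd (Subsingleton.elim u v) h.ne
    · rintro ⟨hne, -⟩; exact absurd (Subsingleton.elim u v) hne
  | succ k ih =>
    rintro V G ⟨p, π, H, X, hπ, hparts, hG⟩
    classical
    choose fp colp injp adjp using fun i : Fin p => ih _ _ (hparts i)
    have transportF : ∀ (v : V) (i : Fin p) (h : π v = i),
        fp (π v) ⟨v, rfl⟩ = fp i ⟨v, h⟩ := by
      intro v i h; cases h; rfl
    have transportC : ∀ (v : V) (i : Fin p) (h : π v = i),
        colp (π v) ⟨v, rfl⟩ = colp i ⟨v, h⟩ := by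
      intro v i h; cases h; rfl
    refine ⟨fun v => Fin.cons (π v : ℕ) (fp (π v) ⟨v, rfl⟩),
            fun v => Fin.cons (decide (v ∈ X)) (colp (π v) ⟨v, rfl⟩), ?_, ?_⟩
    · intro u v h
      have h0 : π u = π v := Fin.val_injective (by simpa using congrFun h 0)
      have htail : fp (π v) ⟨u, h0⟩ = fp (π v) ⟨v, rfl⟩ := by
        funext j
        have := congrFun h j.succ
        simp only [Fin.cons_succ] at this
        rw [← transportF u (π v) h0]
        exact this
      exact congrArg Subtype.val (injp (π v) htail)
    · intro u v
      subst hG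
      simp only [scFlip, SimpleGraph.fromRel_adj]
      apply and_congr_right
      intro hne
      have collapse :
          (((u ∈ X ∧ v ∈ X ∧ ¬H.Adj u v) ∨ ((u ∉ X ∨ v ∉ X) ∧ H.Adj u v)) ∨
           ((v ∈ X ∧ u ∈ X ∧ ¬H.Adj v u) ∨ ((v ∉ X ∨ u ∉ X) ∧ H.Adj v u))) ↔
          ((u ∈ X ∧ v ∈ X ∧ ¬H.Adj u v) ∨ ((u ∉ X ∨ v ∉ X) ∧ H.Adj u v)) := by
        have hc : H.Adj v u ↔ H.Adj u v := SimpleGraph.adj_comm H v u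
        tauto
      rw [collapse]
      by_cases hpp : π u = π v
      · -- same part
        have hne' : (⟨u, hpp⟩ : ↥(π ⁻¹' {π v})) ≠ ⟨v, rfl⟩ :=
          fun h => hne (congrArg Subtype.val h)
        set A := fp (π v) ⟨u, hpp⟩ with hA
        set B := fp (π v) (⟨v, rfl⟩ : ↥(π ⁻¹' {π v})) with hB
        have ht'k : prefLen A B < k := by
          rcases lt_or_eq_of_le (prefLen_le A B) with h | h
          · exact h
          · exact absurd (injp (π v) (funext fun i => prefLen_spec A B i (lt_of_lt_of_le i.isLt h.ge))) hne'
        have ht : prefLen (Fin.cons ((π u : ℕ)) A) (Fin.cons ((π v : ℕ)) B)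
            = prefLen A B + 1 := by
          apply prefLen_eq_of _ _ _ (by have := prefLen_le A B; omega)
          · rintro ⟨iv, hiv⟩ hi
            cases iv with
            | zero =>
              have e0 : (⟨0, hiv⟩ : Fin (k+1)) = 0 := rfl
              rw [e0, Fin.cons_zero, Fin.cons_zero, hpp]
            | succ n =>
              have hn : n < k := by omega
              have es : (⟨n + 1, hiv⟩ : Fin (k+1)) = Fin.succ ⟨n, hn⟩ := rfl
              rw [es, Fin.cons_succ, Fin.cons_succ]
              exact prefLen_spec A B ⟨n, hn⟩ (Nat.lt_of_succ_lt_succ hi)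
          · intro hlt
            have es : (⟨prefLen A B + 1, hlt⟩ : Fin (k+1)) = Fin.succ ⟨prefLen A B, ht'k⟩ := rfl
            rw [es, Fin.cons_succ, Fin.cons_succ]
            exact prefLen_lt_spec A B ht'k
        have hHadj : H.Adj u v ↔
            Odd ((Finset.univ.filter (fun j : Fin k =>
              (j : ℕ) ≤ prefLen A B ∧ colp (π v) ⟨u, hpp⟩ j = true ∧
                colp (π v) ⟨v, rfl⟩ j = true)).card) := by
          have h1 := adjp (π v) ⟨u, hpp⟩ ⟨v, rfl⟩
          simp only [SimpleGraph.comap_adj, Function.Embedding.coe_subtype] at h1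
          rw [and_iff_right hne'] at h1
          exact h1
        simp only [transportF u (π v) hpp, transportC u (π v) hpp]
        rw [ht, card_cons_filter, hHadj]
        simp only [decide_eq_true_eq]
        by_cases hx : u ∈ X ∧ v ∈ X
        · rw [if_pos hx]
          constructor
          · rintro (⟨-, -, hno⟩ | ⟨hno, -⟩)
            · rw [Nat.odd_iff] at hno ⊢
              omega
            · exact absurd hx (by tauto)
          · intro h1n
            refine Or.inl ⟨hx.1, hx.2, ?_⟩
            rw [Nat.odd_iff] at h1n ⊢
            omega
        · rw [if_neg hx]
          rw [zero_add]
          constructor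
          · rintro (⟨h1, h2, -⟩ | ⟨-, h⟩)
            · exact absurd ⟨h1, h2⟩ hx
            · exact h
          · intro h
            exact Or.inr ⟨by tauto, h⟩
      · -- different parts
        have hnadj : ¬ H.Adj u v := fun h => hpp (hπ u v h)
        have ht : prefLen (Fin.cons ((π u : ℕ)) (fp (π u) ⟨u, rfl⟩))
            (Fin.cons ((π v : ℕ)) (fp (π v) ⟨v, rfl⟩)) = 0 := by
          apply prefLen_eq_of _ _ 0 (Nat.zero_le _)
            (fun i hi => absurd hi (Nat.not_lt_zero _))
          intro hlt heq
          have e0 : (⟨0, hlt⟩ : Fin (k+1)) = 0 := rfl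
          rw [e0, Fin.cons_zero, Fin.cons_zero] at heq
          exact hpp (Fin.val_injective heq)
        rw [ht, card_cons_filter0]
        simp only [decide_eq_true_eq]
        constructor
        · rintro (⟨h1, h2, -⟩ | ⟨-, h⟩)
          · rw [if_pos ⟨h1, h2⟩]
            exact odd_one
          · exact absurd h hnadj
        · intro h
          by_cases hx : u ∈ X ∧ v ∈ X
          · exact Or.inl ⟨hx.1, hx.2, hnadj⟩
          · rw [if_neg hx] at h
            simp at h


/-- `SC(k) ⊆ TM(k, 2^k)`. -/
theorem stmt_10 (k : ℕ) {V : Type} [Fintype V] (G : SimpleGraph V)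
    (h : InSC k G) : InTM k (2 ^ k) G := by
  classical
  obtain ⟨f, col, hinj, hadj⟩ := key k V G h
  have hcard : Fintype.card (Fin k → Bool) = 2 ^ k := by simp
  let e : (Fin k → Bool) ≃ Fin (2 ^ k) := Fintype.equivFinOfCardEq hcard
  refine ⟨⟨f, hinj, fun v => e (col v),
    fun i j l => Odd ((Finset.univ.filter (fun t : Fin k =>
      (t : ℕ) ≤ k - l ∧ e.symm i t = true ∧ e.symm j t = true)).card), ?_, ?_⟩⟩
  · intro i j l hS
    have hset : (Finset.univ.filter (fun t : Fin k =>
        (t : ℕ) ≤ k - l ∧ e.symm j t = true ∧ e.symm i t = true)) =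
        (Finset.univ.filter (fun t : Fin k =>
        (t : ℕ) ≤ k - l ∧ e.symm i t = true ∧ e.symm j t = true)) := by
      apply Finset.filter_congr
      intro t _
      constructor <;> (rintro ⟨h1, h2, h3⟩; exact ⟨h1, h3, h2⟩)
    rw [hset]
    exact hS
  · intro u v hne
    rw [hadj u v, and_iff_right hne]
    have hp : k - (k - prefLen (f u) (f v)) = prefLen (f u) (f v) :=
      Nat.sub_sub_self (prefLen_le _ _)
    have hset : (Finset.univ.filter (fun t : Fin k =>
        (t : ℕ) ≤ k - (k - prefLen (f u) (f v)) ∧ e.symm (e (col u)) t = true ∧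
          e.symm (e (col v)) t = true)) =
        (Finset.univ.filter (fun t : Fin k =>
        (t : ℕ) ≤ prefLen (f u) (f v) ∧ col u t = true ∧ col v t = true)) := by
      apply Finset.filter_congr
      intro t _
      rw [hp, Equiv.symm_apply_apply, Equiv.symm_apply_apply]
    exact (iff_of_eq (congrArg Odd (congrArg Finset.card hset))).symm
end

section
/- For ℓ = 3·2^m − 4, the path P_ℓ of length ℓ (on ℓ+1 vertices) has a tree-model with m colours and depth 2m+1, i.e., P_ℓ ∈ TM(2m+1, m). -/
set_option maxHeartbeats 4000000


/-! ### Auxiliary development -/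

/-- Number of vertices of the path modelled at stage `m`. -/
def nV (m : ℕ) : ℕ := 3 * 2 ^ m - 3

/-- Depth of the tree-model at stage `m`. -/
def dP (m : ℕ) : ℕ := 2 * m + 1

lemma nV_succ (m : ℕ) : nV (m + 1) = 2 * nV m + 3 := by
  have h := Nat.one_le_two_pow (n := m)
  rw [nV, nV, pow_succ]; omega

lemma dP_succ (m : ℕ) : dP (m + 1) = dP m + 2 := by
  rw [dP, dP]; omega

lemma three_le_nV {m : ℕ} (hm : 1 ≤ m) : 3 ≤ nV m := by
  have h : 2 ^ 1 ≤ 2 ^ m := Nat.pow_le_pow_right (by norm_num) hm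
  rw [nV]; omega

lemma three_le_dP {m : ℕ} (hm : 1 ≤ m) : 3 ≤ dP m := by
  rw [dP]; omega

/-- An invariant-carrying tree-model of the path on `nV m` vertices, depth `dP m`,
`m` colours, over vertex indices `0,…,nV m − 1`. `lv x y` is the "level" of the
pair `x y`: half their tree distance; `F x k` is the `k`-th coordinate of the
address of `x`. -/
structure Mdl (m : ℕ) where
  F : ℕ → ℕ → ℕ
  colr : ℕ → ℕ
  Sb : ℕ → ℕ → ℕ → Prop
  lv : ℕ → ℕ → ℕ
  bnd : ℕ
  hFb : ∀ x k, x < nV m → F x k < bnd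
  hcol : ∀ x, x < nV m → colr x < m
  hSsymm : ∀ a b l, Sb a b l → Sb b a l
  hSdom : ∀ a b l, Sb a b l → a < m ∧ b < m ∧ 1 ≤ l ∧ l ≤ dP m
  hlsymm : ∀ x y, lv x y = lv y x
  hlub : ∀ x y, lv x y ≤ dP m
  hlpos : ∀ x y, x < nV m → y < nV m → x ≠ y → 1 ≤ lv x y
  hC1 : ∀ x y k, x < nV m → y < nV m → k < dP m - lv x y → F x k = F y k
  hC2 : ∀ x y, x < nV m → y < nV m → x ≠ y →
      F x (dP m - lv x y) ≠ F y (dP m - lv x y)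
  hadj : ∀ x y, x < nV m → y < nV m → x ≠ y →
      (Sb (colr x) (colr y) (lv x y) ↔ (x + 1 = y ∨ y + 1 = x))
  hns0 : ∀ x, x < nV m → x ≠ 0 → 2 ≤ lv 0 x
  hns1 : ∀ x, x < nV m → x ≠ nV m - 1 → 2 ≤ lv (nV m - 1) x

namespace Mdl

/-! #### The base model, `m = 1` : the path on 3 vertices, depth 3, one colour. -/

def bF : ℕ → ℕ → ℕ := fun x k =>
  if x = 1 ∧ k = 0 then 1 else if x = 2 ∧ k = 1 then 1 else 0

def bLv : ℕ → ℕ → ℕ := fun x y =>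
  if x = y then 0 else if (x = 0 ∧ y = 2) ∨ (x = 2 ∧ y = 0) then 2 else 3

lemma nV_one : nV 1 = 3 := by rw [nV]; norm_num

lemma dP_one : dP 1 = 3 := by rw [dP]

def base : Mdl 1 where
  F := bF
  colr := fun _ => 0
  Sb := fun a b l => a = 0 ∧ b = 0 ∧ l = 3
  lv := bLv
  bnd := 2
  hFb := by intro x k _; rw [bF]; split_ifs <;> omega
  hcol := by intro x _; exact Nat.one_pos
  hSsymm := by rintro a b l ⟨h1, h2, h3⟩; exact ⟨h2, h1, h3⟩
  hSdom := by rintro a b l ⟨rfl, rfl, rfl⟩; rw [dP_one]; omega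
  hlsymm := by intro x y; rw [bLv, bLv]; split_ifs <;> omega
  hlub := by intro x y; rw [dP_one, bLv]; split_ifs <;> omega
  hlpos := by intro x y _ _ h; rw [bLv]; split_ifs <;> omega
  hC1 := by
    intro x y k hx hy hk
    rw [nV_one] at hx hy
    rw [dP_one, bLv] at hk
    interval_cases x <;> interval_cases y <;>
      first
        | rfl
        | (norm_num at hk; subst hk; decide)
        | (norm_num at hk)
  hC2 := by
    intro x y hx hy hne
    rw [nV_one] at hx hy
    rw [dP_one, bLv]
    interval_cases x <;> interval_cases y <;> first | omega | decide
  hadj := by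
    intro x y hx hy hne
    rw [nV_one] at hx hy
    rw [bLv]
    interval_cases x <;> interval_cases y <;> first | omega | decide
  hns0 := by
    intro x hx hne
    rw [nV_one] at hx
    rw [bLv]; split_ifs <;> omega
  hns1 := by
    intro x hx hne
    rw [nV_one] at hx; rw [nV_one] at hne
    rw [nV_one, bLv]; split_ifs <;> omega

/-! #### The doubling step.

Given a model `M` of the path on `n = nV m` vertices at depth `d = dP m`, we build a
model of the path on `2n+3` vertices at depth `d+2` with one extra colour `c = m`:
two copies of `M` housed in sub-blocks `(0,0,·)` and `(0,1,·)` of side `0` of the new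
root, and three new vertices of colour `c`: `x_A` (a sibling of the end `p_{n-1}` of
copy A), `y` (alone on side `1` of the root), `x_B` (a sibling of the end of copy B).
New path: `A p₀ … A p_{n-1}, x_A, y, x_B, B p_{n-1}, …, B p₀`, with new signature
entries `(c, colr p_{n-1}, 1)` and `(c, c, d+2)`. Indices: `x_A = n`, `y = n+1`,
`x_B = n+2`, `B p_j = 2n+2-j`. -/

variable {m : ℕ} (M : Mdl m)

def sF : ℕ → ℕ → ℕ := fun x k =>
  if x < nV m then (if k < 2 then 0 else M.F x (k - 2))
  else if x = nV m then
    (if k < 2 then 0 else if k = dP m + 1 then M.bnd else M.F (nV m - 1) (k - 2))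
  else if x = nV m + 1 then (if k = 0 then 1 else 0)
  else if x = nV m + 2 then
    (if k = 0 then 0 else if k = 1 then 1 else
      if k = dP m + 1 then M.bnd else M.F (nV m - 1) (k - 2))
  else (if k = 0 then 0 else if k = 1 then 1 else M.F (2 * nV m + 2 - x) (k - 2))

def scol : ℕ → ℕ := fun x =>
  if x < nV m then M.colr x
  else if x ≤ nV m + 2 then m
  else M.colr (2 * nV m + 2 - x)

def sSb : ℕ → ℕ → ℕ → Prop := fun a b l =>
  (a < m ∧ b < m ∧ M.Sb a b l) ∨
  (l = 1 ∧ ((a = m ∧ b = M.colr (nV m - 1)) ∨ (b = m ∧ a = M.colr (nV m - 1)))) ∨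
  (l = dP m + 2 ∧ a = m ∧ b = m)

/-- level function, assuming `x ≤ y`. -/
def slvc : ℕ → ℕ → ℕ := fun x y =>
  if y < nV m then M.lv x y
  else if y = nV m then
    (if x = nV m then 0 else if x = nV m - 1 then 1 else M.lv (nV m - 1) x)
  else if y = nV m + 1 then (if x = nV m + 1 then 0 else dP m + 2)
  else if y = nV m + 2 then
    (if x = nV m + 2 then 0 else if x = nV m + 1 then dP m + 2 else dP m + 1)
  else
    if x ≤ nV m then dP m + 1
    else if x = nV m + 1 then dP m + 2
    else if x = nV m + 2 then
      (if y = nV m + 3 then 1 else M.lv (nV m - 1) (2 * nV m + 2 - y))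
    else M.lv (2 * nV m + 2 - x) (2 * nV m + 2 - y)

def slv : ℕ → ℕ → ℕ := fun x y => if x ≤ y then slvc M x y else slvc M y x

lemma sSb_symm {a b l : ℕ} (h : sSb M a b l) : sSb M b a l := by
  rcases h with ⟨h1, h2, h3⟩ | ⟨h1, h2 | h2⟩ | ⟨h1, h2, h3⟩
  · exact Or.inl ⟨h2, h1, M.hSsymm _ _ _ h3⟩
  · exact Or.inr (Or.inl ⟨h1, Or.inr h2⟩)
  · exact Or.inr (Or.inl ⟨h1, Or.inl h2⟩)
  · exact Or.inr (Or.inr ⟨h1, h3, h2⟩)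

lemma scol_A {x : ℕ} (h : x < nV m) : scol M x = M.colr x := by
  rw [scol, if_pos h]

lemma scol_mid {x : ℕ} (h1 : nV m ≤ x) (h2 : x ≤ nV m + 2) : scol M x = m := by
  rw [scol, if_neg (by omega), if_pos h2]

lemma scol_B {x : ℕ} (h : nV m + 2 < x) : scol M x = M.colr (2 * nV m + 2 - x) := by
  rw [scol, if_neg (by omega), if_neg (by omega)]

lemma slvc_ub : ∀ x y, slvc M x y ≤ dP m + 2 := by
  intro x y
  have h1 := M.hlub x y
  have h2 := M.hlub (nV m - 1) x
  have h3 := M.hlub (nV m - 1) (2 * nV m + 2 - y)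
  have h4 := M.hlub (2 * nV m + 2 - x) (2 * nV m + 2 - y)
  rw [slvc]; split_ifs <;> omega

lemma slvc_pos (hm : 1 ≤ m) : ∀ x y, x < y → y < 2 * nV m + 3 → 1 ≤ slvc M x y := by
  intro x y hxy hy
  have hn := three_le_nV hm
  rw [slvc]
  split_ifs <;>
    first
      | omega
      | (exact M.hlpos x y (by omega) (by omega) (by omega))
      | (exact M.hlpos (nV m - 1) x (by omega) (by omega) (by omega))
      | (exact M.hlpos (nV m - 1) (2 * nV m + 2 - y) (by omega) (by omega) (by omega))
      | (exact M.hlpos (2 * nV m + 2 - x) (2 * nV m + 2 - y) (by omega) (by omega)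
          (by omega))

lemma sns0 (hm : 1 ≤ m) : ∀ x, 0 < x → x < 2 * nV m + 3 → 2 ≤ slvc M 0 x := by
  intro x hx0 hx
  have hn := three_le_nV hm
  have hd := three_le_dP hm
  rcases Nat.lt_or_ge x (nV m) with h1 | h1
  · rw [slvc, if_pos h1]; exact M.hns0 x h1 (by omega)
  rcases Nat.lt_or_ge x (nV m + 1) with h2 | h2
  · have hx' : x = nV m := by omega
    subst hx'
    rw [slvc, if_neg (by omega), if_pos rfl, if_neg (by omega), if_neg (by omega)]
    exact M.hns1 0 (by omega) (by omega)
  rcases Nat.lt_or_ge x (nV m + 2) with h3 | h3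
  · have hx' : x = nV m + 1 := by omega
    subst hx'
    rw [slvc, if_neg (by omega), if_neg (by omega), if_pos rfl, if_neg (by omega)]
    omega
  rcases Nat.lt_or_ge x (nV m + 3) with h4 | h4
  · have hx' : x = nV m + 2 := by omega
    subst hx'
    rw [slvc, if_neg (by omega), if_neg (by omega), if_neg (by omega), if_pos rfl,
      if_neg (by omega), if_neg (by omega)]
    omega
  · rw [slvc, if_neg (by omega), if_neg (by omega), if_neg (by omega), if_neg (by omega),
      if_pos (by omega)]
    omega

lemma sns1 (hm : 1 ≤ m) : ∀ x, x < 2 * nV m + 2 → 2 ≤ slvc M x (2 * nV m + 2) := by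
  intro x hx
  have hn := three_le_nV hm
  have hd := three_le_dP hm
  rw [slvc, if_neg (by omega), if_neg (by omega), if_neg (by omega), if_neg (by omega)]
  rcases Nat.lt_or_ge x (nV m + 1) with h1 | h1
  · rw [if_pos (by omega)]; omega
  rcases Nat.lt_or_ge x (nV m + 2) with h2 | h2
  · rw [if_neg (by omega), if_pos (by omega : x = nV m + 1)]; omega
  rcases Nat.lt_or_ge x (nV m + 3) with h3 | h3
  · rw [if_neg (by omega), if_neg (by omega), if_pos (by omega : x = nV m + 2),
      if_neg (by omega), Nat.sub_self]
    exact M.hns1 0 (by omega) (by omega)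
  · rw [if_neg (by omega), if_neg (by omega), if_neg (by omega), Nat.sub_self,
      M.hlsymm]
    exact M.hns0 (2 * nV m + 2 - x) (by omega) (by omega)

lemma sF_A {x k : ℕ} (h : x < nV m) :
    sF M x k = if k < 2 then 0 else M.F x (k - 2) := by
  rw [sF, if_pos h]

lemma sF_xA (k : ℕ) :
    sF M (nV m) k = if k < 2 then 0 else if k = dP m + 1 then M.bnd
      else M.F (nV m - 1) (k - 2) := by
  rw [sF, if_neg (lt_irrefl _), if_pos rfl]

lemma sF_y (k : ℕ) : sF M (nV m + 1) k = if k = 0 then 1 else 0 := by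
  rw [sF, if_neg (by omega), if_neg (by omega), if_pos rfl]

lemma sF_xB (k : ℕ) :
    sF M (nV m + 2) k = if k = 0 then 0 else if k = 1 then 1 else
      if k = dP m + 1 then M.bnd else M.F (nV m - 1) (k - 2) := by
  rw [sF, if_neg (by omega), if_neg (by omega), if_neg (by omega), if_pos rfl]

lemma sF_B {x : ℕ} (k : ℕ) (h : nV m + 2 < x) :
    sF M x k = if k = 0 then 0 else if k = 1 then 1 else
      M.F (2 * nV m + 2 - x) (k - 2) := by
  rw [sF, if_neg (by omega), if_neg (by omega), if_neg (by omega), if_neg (by omega)]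

lemma sC1 (hm : 1 ≤ m) : ∀ x y, x < y → y < 2 * nV m + 3 →
    ∀ k, k < dP m + 2 - slvc M x y → sF M x k = sF M y k := by
  intro x y hxy hy k hk
  have hn := three_le_nV hm
  have hd := three_le_dP hm
  rcases Nat.lt_or_ge y (nV m) with hy1 | hy1
  · -- both in copy A
    have hlv : slvc M x y = M.lv x y := by rw [slvc, if_pos hy1]
    rw [hlv] at hk
    have hp := M.hlpos x y (by omega) hy1 (by omega)
    have hu := M.hlub x y
    rw [sF_A M (show x < nV m by omega), sF_A M hy1]
    split_ifs
    · rfl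
    · exact M.hC1 x y (k - 2) (by omega) hy1 (by omega)
  rcases Nat.lt_or_ge y (nV m + 1) with hy2 | hy2
  · -- y = x_A
    have hyn : y = nV m := by omega
    subst hyn
    by_cases hx1 : x = nV m - 1
    · have hlv : slvc M x (nV m) = 1 := by
        rw [slvc, if_neg (by omega), if_pos rfl, if_neg (by omega), if_pos hx1]
      rw [hlv] at hk
      subst hx1
      rw [sF_A M (show nV m - 1 < nV m by omega), sF_xA M]
      split_ifs <;> first | rfl | omega
    · have hlv : slvc M x (nV m) = M.lv (nV m - 1) x := by
        rw [slvc, if_neg (by omega), if_pos rfl, if_neg (by omega), if_neg hx1]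
      rw [hlv] at hk
      have hp : 2 ≤ M.lv (nV m - 1) x := M.hns1 x (by omega) hx1
      have hu := M.hlub (nV m - 1) x
      rw [sF_A M (show x < nV m by omega), sF_xA M]
      split_ifs <;>
        first
          | rfl
          | omega
          | (exact (M.hC1 (nV m - 1) x (k - 2) (by omega) (by omega) (by omega)).symm)
  rcases Nat.lt_or_ge y (nV m + 2) with hy3 | hy3
  · -- y = the middle vertex: level is top, nothing to prove
    have hyn : y = nV m + 1 := by omega
    subst hyn
    have hlv : slvc M x (nV m + 1) = dP m + 2 := by
      rw [slvc, if_neg (by omega), if_neg (by omega), if_pos rfl, if_neg (by omega)]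
    rw [hlv] at hk; omega
  rcases Nat.lt_or_ge y (nV m + 3) with hy4 | hy4
  · -- y = x_B
    have hyn : y = nV m + 2 := by omega
    subst hyn
    by_cases hx1 : x = nV m + 1
    · have hlv : slvc M x (nV m + 2) = dP m + 2 := by
        rw [slvc, if_neg (by omega), if_neg (by omega), if_neg (by omega), if_pos rfl,
          if_neg (by omega), if_pos hx1]
      rw [hlv] at hk; omega
    · have hlv : slvc M x (nV m + 2) = dP m + 1 := by
        rw [slvc, if_neg (by omega), if_neg (by omega), if_neg (by omega), if_pos rfl,
          if_neg (by omega), if_neg hx1]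
      rw [hlv] at hk
      have hk0 : k = 0 := by omega
      subst hk0
      rw [sF_xB M]
      rcases Nat.lt_or_ge x (nV m) with hxa | hxa
      · rw [sF_A M hxa]; split_ifs <;> omega
      · have hxn : x = nV m := by omega
        subst hxn
        rw [sF_xA M]; split_ifs <;> omega
  · -- y in copy B
    rcases Nat.lt_or_ge x (nV m + 1) with hxa | hxa
    · -- x in copy A or x_A : level d+1, k = 0
      have hlv : slvc M x y = dP m + 1 := by
        rw [slvc, if_neg (by omega), if_neg (by omega), if_neg (by omega),
          if_neg (by omega), if_pos (by omega)]
      rw [hlv] at hk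
      have hk0 : k = 0 := by omega
      subst hk0
      rw [sF_B (M := M) (x := y) 0 (show nV m + 2 < y by omega)]
      rcases Nat.lt_or_ge x (nV m) with hxb | hxb
      · rw [sF_A M hxb]; split_ifs <;> omega
      · have hxn : x = nV m := by omega
        subst hxn
        rw [sF_xA M]; split_ifs <;> omega
    rcases Nat.lt_or_ge x (nV m + 2) with hxb | hxb
    · -- x = middle vertex : top level
      have hxn : x = nV m + 1 := by omega
      subst hxn
      have hlv : slvc M (nV m + 1) y = dP m + 2 := by
        rw [slvc, if_neg (by omega), if_neg (by omega), if_neg (by omega),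
          if_neg (by omega), if_neg (by omega), if_pos rfl]
      rw [hlv] at hk; omega
    rcases Nat.lt_or_ge x (nV m + 3) with hxc | hxc
    · -- x = x_B, y in copy B
      have hxn : x = nV m + 2 := by omega
      subst hxn
      by_cases hy5 : y = nV m + 3
      · have hlv : slvc M (nV m + 2) y = 1 := by
          rw [slvc, if_neg (by omega), if_neg (by omega), if_neg (by omega),
            if_neg (by omega), if_neg (by omega), if_neg (by omega), if_pos rfl,
            if_pos hy5]
        rw [hlv] at hk
        subst hy5
        rw [sF_xB M, sF_B M k (by omega),
          show 2 * nV m + 2 - (nV m + 3) = nV m - 1 from by omega]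
        split_ifs <;> first | rfl | omega
      · set z := 2 * nV m + 2 - y with hzdef
        have hzlt : z < nV m := by omega
        have hzne : z ≠ nV m - 1 := by omega
        have hlv : slvc M (nV m + 2) y = M.lv (nV m - 1) z := by
          rw [slvc, if_neg (by omega), if_neg (by omega), if_neg (by omega),
            if_neg (by omega), if_neg (by omega), if_neg (by omega), if_pos rfl,
            if_neg hy5]
        rw [hlv] at hk
        have hp : 2 ≤ M.lv (nV m - 1) z := M.hns1 z hzlt hzne
        have hu := M.hlub (nV m - 1) z
        rw [sF_xB M, sF_B M k (by omega)]
        split_ifs <;>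
          first
            | rfl
            | omega
            | (exact M.hC1 (nV m - 1) z (k - 2) (by omega) hzlt (by omega))
    · -- both in copy B
      set w := 2 * nV m + 2 - x with hwdef
      set z := 2 * nV m + 2 - y with hzdef
      have hwlt : w < nV m := by omega
      have hzlt : z < nV m := by omega
      have hwz : w ≠ z := by omega
      have hlv : slvc M x y = M.lv w z := by
        rw [slvc, if_neg (by omega), if_neg (by omega), if_neg (by omega),
          if_neg (by omega), if_neg (by omega), if_neg (by omega), if_neg (by omega)]
      rw [hlv] at hk
      have hp := M.hlpos w z hwlt hzlt hwz
      have hu := M.hlub w z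
      rw [sF_B M k (show nV m + 2 < x by omega), sF_B M k (show nV m + 2 < y by omega)]
      split_ifs <;>
        first
          | rfl
          | omega
          | (exact M.hC1 w z (k - 2) hwlt hzlt (by omega))

lemma sC2 (hm : 1 ≤ m) : ∀ x y, x < y → y < 2 * nV m + 3 →
    sF M x (dP m + 2 - slvc M x y) ≠ sF M y (dP m + 2 - slvc M x y) := by
  intro x y hxy hy
  have hn := three_le_nV hm
  have hd := three_le_dP hm
  rcases Nat.lt_or_ge y (nV m) with hy1 | hy1
  · have hlv : slvc M x y = M.lv x y := by rw [slvc, if_pos hy1]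
    have hp := M.hlpos x y (by omega) hy1 (by omega)
    have hu := M.hlub x y
    have harg : dP m + 2 - M.lv x y - 2 = dP m - M.lv x y := by omega
    rw [hlv, sF_A M (show x < nV m by omega), sF_A M hy1]
    split_ifs
    · omega
    · rw [harg]; exact M.hC2 x y (by omega) hy1 (by omega)
  rcases Nat.lt_or_ge y (nV m + 1) with hy2 | hy2
  · have hyn : y = nV m := by omega
    subst hyn
    by_cases hx1 : x = nV m - 1
    · have hlv : slvc M x (nV m) = 1 := by
        rw [slvc, if_neg (by omega), if_pos rfl, if_neg (by omega), if_pos hx1]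
      subst hx1
      have hFbb := M.hFb (nV m - 1) (dP m + 2 - 1 - 2) (by omega)
      rw [hlv, sF_A M (show nV m - 1 < nV m by omega), sF_xA M]
      split_ifs <;> omega
    · have hlv : slvc M x (nV m) = M.lv (nV m - 1) x := by
        rw [slvc, if_neg (by omega), if_pos rfl, if_neg (by omega), if_neg hx1]
      have hp : 2 ≤ M.lv (nV m - 1) x := M.hns1 x (by omega) hx1
      have hu := M.hlub (nV m - 1) x
      have harg : dP m + 2 - M.lv (nV m - 1) x - 2 = dP m - M.lv (nV m - 1) x := by
        omega
      rw [hlv, sF_A M (show x < nV m by omega), sF_xA M]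
      split_ifs <;>
        first
          | omega
          | (rw [harg]; exact (M.hC2 (nV m - 1) x (by omega) (by omega) (by omega)).symm)
  rcases Nat.lt_or_ge y (nV m + 2) with hy3 | hy3
  · have hyn : y = nV m + 1 := by omega
    subst hyn
    have hlv : slvc M x (nV m + 1) = dP m + 2 := by
      rw [slvc, if_neg (by omega), if_neg (by omega), if_pos rfl, if_neg (by omega)]
    rw [hlv, sF_y M]
    rcases Nat.lt_or_ge x (nV m) with hxa | hxa
    · rw [sF_A M hxa]; split_ifs <;> omega
    · have hxn : x = nV m := by omega
      subst hxn
      rw [sF_xA M]; split_ifs <;> omega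
  rcases Nat.lt_or_ge y (nV m + 3) with hy4 | hy4
  · have hyn : y = nV m + 2 := by omega
    subst hyn
    by_cases hx1 : x = nV m + 1
    · have hlv : slvc M x (nV m + 2) = dP m + 2 := by
        rw [slvc, if_neg (by omega), if_neg (by omega), if_neg (by omega), if_pos rfl,
          if_neg (by omega), if_pos hx1]
      subst hx1
      rw [hlv, sF_y M, sF_xB M]
      split_ifs <;> omega
    · have hlv : slvc M x (nV m + 2) = dP m + 1 := by
        rw [slvc, if_neg (by omega), if_neg (by omega), if_neg (by omega), if_pos rfl,
          if_neg (by omega), if_neg hx1]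
      rw [hlv, sF_xB M]
      rcases Nat.lt_or_ge x (nV m) with hxa | hxa
      · rw [sF_A M hxa]; split_ifs <;> omega
      · have hxn : x = nV m := by omega
        subst hxn
        rw [sF_xA M]; split_ifs <;> omega
  · rcases Nat.lt_or_ge x (nV m + 1) with hxa | hxa
    · have hlv : slvc M x y = dP m + 1 := by
        rw [slvc, if_neg (by omega), if_neg (by omega), if_neg (by omega),
          if_neg (by omega), if_pos (by omega)]
      rw [hlv, sF_B M _ (show nV m + 2 < y by omega)]
      rcases Nat.lt_or_ge x (nV m) with hxb | hxb
      · rw [sF_A M hxb]; split_ifs <;> omega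
      · have hxn : x = nV m := by omega
        subst hxn
        rw [sF_xA M]; split_ifs <;> omega
    rcases Nat.lt_or_ge x (nV m + 2) with hxb | hxb
    · have hxn : x = nV m + 1 := by omega
      subst hxn
      have hlv : slvc M (nV m + 1) y = dP m + 2 := by
        rw [slvc, if_neg (by omega), if_neg (by omega), if_neg (by omega),
          if_neg (by omega), if_neg (by omega), if_pos rfl]
      rw [hlv, sF_y M, sF_B M _ (show nV m + 2 < y by omega)]
      split_ifs <;> omega
    rcases Nat.lt_or_ge x (nV m + 3) with hxc | hxc
    · have hxn : x = nV m + 2 := by omega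
      subst hxn
      by_cases hy5 : y = nV m + 3
      · have hlv : slvc M (nV m + 2) y = 1 := by
          rw [slvc, if_neg (by omega), if_neg (by omega), if_neg (by omega),
            if_neg (by omega), if_neg (by omega), if_neg (by omega), if_pos rfl,
            if_pos hy5]
        subst hy5
        have hFbb := M.hFb (nV m - 1) (dP m + 2 - 1 - 2) (by omega)
        rw [hlv, sF_xB M, sF_B M _ (by omega),
          show 2 * nV m + 2 - (nV m + 3) = nV m - 1 from by omega]
        split_ifs <;> omega
      · set z := 2 * nV m + 2 - y with hzdef
        have hzlt : z < nV m := by omega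
        have hzne : z ≠ nV m - 1 := by omega
        have hlv : slvc M (nV m + 2) y = M.lv (nV m - 1) z := by
          rw [slvc, if_neg (by omega), if_neg (by omega), if_neg (by omega),
            if_neg (by omega), if_neg (by omega), if_neg (by omega), if_pos rfl,
            if_neg hy5]
        have hp : 2 ≤ M.lv (nV m - 1) z := M.hns1 z hzlt hzne
        have hu := M.hlub (nV m - 1) z
        have harg : dP m + 2 - M.lv (nV m - 1) z - 2 = dP m - M.lv (nV m - 1) z := by
          omega
        rw [hlv, sF_xB M, sF_B M _ (show nV m + 2 < y by omega)]
        split_ifs <;>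
          first
            | omega
            | (rw [harg]; exact M.hC2 (nV m - 1) z (by omega) hzlt (by omega))
    · set w := 2 * nV m + 2 - x with hwdef
      set z := 2 * nV m + 2 - y with hzdef
      have hwlt : w < nV m := by omega
      have hzlt : z < nV m := by omega
      have hwz : w ≠ z := by omega
      have hlv : slvc M x y = M.lv w z := by
        rw [slvc, if_neg (by omega), if_neg (by omega), if_neg (by omega),
          if_neg (by omega), if_neg (by omega), if_neg (by omega), if_neg (by omega)]
      have hp := M.hlpos w z hwlt hzlt hwz
      have hu := M.hlub w z
      have harg : dP m + 2 - M.lv w z - 2 = dP m - M.lv w z := by omega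
      rw [hlv, sF_B M _ (show nV m + 2 < x by omega),
        sF_B M _ (show nV m + 2 < y by omega)]
      split_ifs <;>
        first
          | omega
          | (rw [harg]; exact M.hC2 w z hwlt hzlt hwz)

lemma sadj (hm : 1 ≤ m) : ∀ x y, x < y → y < 2 * nV m + 3 →
    (sSb M (scol M x) (scol M y) (slvc M x y) ↔ (x + 1 = y ∨ y + 1 = x)) := by
  intro x y hxy hy
  have hn := three_le_nV hm
  have hd := three_le_dP hm
  have hce := M.hcol (nV m - 1) (by omega)
  rcases Nat.lt_or_ge y (nV m) with hy1 | hy1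
  · -- both in copy A
    have hlv : slvc M x y = M.lv x y := by rw [slvc, if_pos hy1]
    have hcx := M.hcol x (by omega)
    have hcy := M.hcol y hy1
    rw [hlv, scol_A M (show x < nV m by omega), scol_A M hy1, sSb]
    constructor
    · rintro (⟨-, -, h⟩ | ⟨h1, ⟨h2, h3⟩ | ⟨h2, h3⟩⟩ | ⟨h1, h2, h3⟩)
      · exact (M.hadj x y (by omega) hy1 (by omega)).1 h
      · omega
      · omega
      · omega
    · intro h
      exact Or.inl ⟨hcx, hcy, (M.hadj x y (by omega) hy1 (by omega)).2 h⟩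
  rcases Nat.lt_or_ge y (nV m + 1) with hy2 | hy2
  · -- y = x_A
    have hyn : y = nV m := by omega
    subst hyn
    rw [scol_A M (show x < nV m by omega), scol_mid (M := M) (x := nV m) (by omega) (by omega)]
    by_cases hx1 : x = nV m - 1
    · have hlv : slvc M x (nV m) = 1 := by
        rw [slvc, if_neg (by omega), if_pos rfl, if_neg (by omega), if_pos hx1]
      rw [hlv, sSb]
      constructor
      · intro _; omega
      · intro _
        exact Or.inr (Or.inl ⟨rfl, Or.inr ⟨rfl, by rw [hx1]⟩⟩)
    · have hlv : slvc M x (nV m) = M.lv (nV m - 1) x := by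
        rw [slvc, if_neg (by omega), if_pos rfl, if_neg (by omega), if_neg hx1]
      have hp : 2 ≤ M.lv (nV m - 1) x := M.hns1 x (by omega) hx1
      have hcx := M.hcol x (by omega)
      rw [hlv, sSb]
      constructor
      · rintro (⟨-, h2, -⟩ | ⟨h1, ⟨h2, h3⟩ | ⟨h2, h3⟩⟩ | ⟨h1, h2, h3⟩) <;> omega
      · intro h; exfalso; omega
  rcases Nat.lt_or_ge y (nV m + 2) with hy3 | hy3
  · -- y = middle vertex
    have hyn : y = nV m + 1 := by omega
    subst hyn
    have hlv : slvc M x (nV m + 1) = dP m + 2 := by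
      rw [slvc, if_neg (by omega), if_neg (by omega), if_pos rfl, if_neg (by omega)]
    rw [hlv, scol_mid (M := M) (x := nV m + 1) (by omega) (by omega)]
    rcases Nat.lt_or_ge x (nV m) with hxa | hxa
    · have hcx := M.hcol x hxa
      rw [scol_A M hxa, sSb]
      constructor
      · rintro (⟨-, h2, -⟩ | ⟨h1, ⟨h2, h3⟩ | ⟨h2, h3⟩⟩ | ⟨h1, h2, h3⟩) <;> omega
      · intro h; exfalso; omega
    · have hxn : x = nV m := by omega
      subst hxn
      rw [scol_mid (M := M) (x := nV m) (by omega) (by omega), sSb]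
      constructor
      · intro _; omega
      · intro _; exact Or.inr (Or.inr ⟨rfl, rfl, rfl⟩)
  rcases Nat.lt_or_ge y (nV m + 3) with hy4 | hy4
  · -- y = x_B
    have hyn : y = nV m + 2 := by omega
    subst hyn
    rw [scol_mid M (show nV m ≤ nV m + 2 by omega) (le_refl _)]
    by_cases hx1 : x = nV m + 1
    · have hlv : slvc M x (nV m + 2) = dP m + 2 := by
        rw [slvc, if_neg (by omega), if_neg (by omega), if_neg (by omega), if_pos rfl,
          if_neg (by omega), if_pos hx1]
      subst hx1
      rw [hlv, scol_mid (M := M) (x := nV m + 1) (by omega) (by omega), sSb]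
      constructor
      · intro _; omega
      · intro _; exact Or.inr (Or.inr ⟨rfl, rfl, rfl⟩)
    · have hlv : slvc M x (nV m + 2) = dP m + 1 := by
        rw [slvc, if_neg (by omega), if_neg (by omega), if_neg (by omega), if_pos rfl,
          if_neg (by omega), if_neg hx1]
      rw [hlv]
      rcases Nat.lt_or_ge x (nV m) with hxa | hxa
      · have hcx := M.hcol x hxa
        rw [scol_A M hxa, sSb]
        constructor
        · rintro (⟨-, h2, -⟩ | ⟨h1, ⟨h2, h3⟩ | ⟨h2, h3⟩⟩ | ⟨h1, h2, h3⟩) <;> omega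
        · intro h; exfalso; omega
      · have hxn : x = nV m := by omega
        subst hxn
        rw [scol_mid (M := M) (x := nV m) (by omega) (by omega), sSb]
        constructor
        · rintro (⟨h2, -, -⟩ | ⟨h1, ⟨h2, h3⟩ | ⟨h2, h3⟩⟩ | ⟨h1, h2, h3⟩) <;> omega
        · intro h; exfalso; omega
  · -- y in copy B
    have hcz := M.hcol (2 * nV m + 2 - y) (by omega)
    rw [scol_B M (show nV m + 2 < y by omega)]
    rcases Nat.lt_or_ge x (nV m) with hxa | hxa
    · have hcx := M.hcol x hxa
      have hlv : slvc M x y = dP m + 1 := by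
        rw [slvc, if_neg (by omega), if_neg (by omega), if_neg (by omega),
          if_neg (by omega), if_pos (by omega)]
      rw [hlv, scol_A M hxa, sSb]
      constructor
      · rintro (⟨-, -, h3⟩ | ⟨h1, ⟨h2, h3⟩ | ⟨h2, h3⟩⟩ | ⟨h1, h2, h3⟩)
        · have := M.hSdom _ _ _ h3; omega
        · omega
        · omega
        · omega
      · intro h; exfalso; omega
    rcases Nat.lt_or_ge x (nV m + 1) with hxb | hxb
    · have hxn : x = nV m := by omega
      subst hxn
      have hlv : slvc M (nV m) y = dP m + 1 := by
        rw [slvc, if_neg (by omega), if_neg (by omega), if_neg (by omega),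
          if_neg (by omega), if_pos (by omega)]
      rw [hlv, scol_mid (M := M) (x := nV m) (by omega) (by omega), sSb]
      constructor
      · rintro (⟨h2, -, -⟩ | ⟨h1, ⟨h2, h3⟩ | ⟨h2, h3⟩⟩ | ⟨h1, h2, h3⟩) <;> omega
      · intro h; exfalso; omega
    rcases Nat.lt_or_ge x (nV m + 2) with hxc | hxc
    · have hxn : x = nV m + 1 := by omega
      subst hxn
      have hlv : slvc M (nV m + 1) y = dP m + 2 := by
        rw [slvc, if_neg (by omega), if_neg (by omega), if_neg (by omega),
          if_neg (by omega), if_neg (by omega), if_pos rfl]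
      rw [hlv, scol_mid (M := M) (x := nV m + 1) (by omega) (by omega), sSb]
      constructor
      · rintro (⟨h2, -, -⟩ | ⟨h1, ⟨h2, h3⟩ | ⟨h2, h3⟩⟩ | ⟨h1, h2, h3⟩) <;> omega
      · intro h; exfalso; omega
    rcases Nat.lt_or_ge x (nV m + 3) with hxd | hxd
    · have hxn : x = nV m + 2 := by omega
      subst hxn
      rw [scol_mid (M := M) (x := nV m + 2) (by omega) (by omega)]
      by_cases hy5 : y = nV m + 3
      · have hlv : slvc M (nV m + 2) y = 1 := by
          rw [slvc, if_neg (by omega), if_neg (by omega), if_neg (by omega),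
            if_neg (by omega), if_neg (by omega), if_neg (by omega), if_pos rfl,
            if_pos hy5]
        subst hy5
        rw [hlv, show 2 * nV m + 2 - (nV m + 3) = nV m - 1 from by omega, sSb]
        constructor
        · intro _; omega
        · intro _; exact Or.inr (Or.inl ⟨rfl, Or.inl ⟨rfl, rfl⟩⟩)
      · have hlv : slvc M (nV m + 2) y = M.lv (nV m - 1) (2 * nV m + 2 - y) := by
          rw [slvc, if_neg (by omega), if_neg (by omega), if_neg (by omega),
            if_neg (by omega), if_neg (by omega), if_neg (by omega), if_pos rfl,
            if_neg hy5]
        have hp : 2 ≤ M.lv (nV m - 1) (2 * nV m + 2 - y) :=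
          M.hns1 _ (by omega) (by omega)
        have hu := M.hlub (nV m - 1) (2 * nV m + 2 - y)
        rw [hlv, sSb]
        constructor
        · rintro (⟨h2, -, -⟩ | ⟨h1, ⟨h2, h3⟩ | ⟨h2, h3⟩⟩ | ⟨h1, h2, h3⟩) <;> omega
        · intro h; exfalso; omega
    · -- both in copy B
      have hcw := M.hcol (2 * nV m + 2 - x) (by omega)
      have hlv : slvc M x y = M.lv (2 * nV m + 2 - x) (2 * nV m + 2 - y) := by
        rw [slvc, if_neg (by omega), if_neg (by omega), if_neg (by omega),
          if_neg (by omega), if_neg (by omega), if_neg (by omega), if_neg (by omega)]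
      rw [hlv, scol_B M (show nV m + 2 < x by omega), sSb]
      have hA := M.hadj (2 * nV m + 2 - x) (2 * nV m + 2 - y) (by omega) (by omega)
        (by omega)
      constructor
      · rintro (⟨-, -, h3⟩ | ⟨h1, ⟨h2, h3⟩ | ⟨h2, h3⟩⟩ | ⟨h1, h2, h3⟩)
        · have := hA.1 h3; omega
        · omega
        · omega
        · omega
      · intro h
        exact Or.inl ⟨hcw, hcz, hA.2 (by omega)⟩

/-- The doubling step. -/
def step (hm : 1 ≤ m) : Mdl (m + 1) where
  F := sF M
  colr := scol M
  Sb := sSb M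
  lv := slv M
  bnd := M.bnd + 1
  hFb := by
    intro x k hx
    rw [nV_succ] at hx
    have hn := three_le_nV hm
    have h1 := M.hFb x (k - 2)
    have h2 := M.hFb (nV m - 1) (k - 2) (by omega)
    have h3 := M.hFb (2 * nV m + 2 - x) (k - 2)
    rw [sF]
    split_ifs <;>
      first
        | omega
        | (have := h1 (by omega); omega)
        | (have := h3 (by omega); omega)
  hcol := by
    intro x hx
    rw [nV_succ] at hx
    have hn := three_le_nV hm
    rw [scol]
    split_ifs with h1 h2
    · have := M.hcol x h1; omega
    · omega
    · have := M.hcol (2 * nV m + 2 - x) (by omega); omega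
  hSsymm := fun a b l h => sSb_symm M h
  hSdom := by
    intro a b l h
    rw [dP_succ]
    have hn := three_le_nV hm
    have hce := M.hcol (nV m - 1) (by omega)
    rcases h with ⟨h1, h2, h3⟩ | ⟨h1, ⟨h2, h3⟩ | ⟨h2, h3⟩⟩ | ⟨h1, h2, h3⟩
    · have := M.hSdom a b l h3; omega
    · omega
    · omega
    · omega
  hlsymm := by
    intro x y
    rw [slv, slv]
    rcases Nat.lt_trichotomy x y with h | h | h
    · rw [if_pos (by omega), if_neg (by omega)]
    · subst h; rfl
    · rw [if_neg (by omega), if_pos (by omega)]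
  hlub := by
    intro x y
    rw [dP_succ, slv]
    split_ifs
    · exact slvc_ub M x y
    · exact slvc_ub M y x
  hlpos := by
    intro x y hx hy hne
    rw [nV_succ] at hx hy
    rw [slv]
    rcases Nat.lt_trichotomy x y with h | h | h
    · rw [if_pos (by omega)]; exact slvc_pos M hm x y h (by omega)
    · exact absurd h hne
    · rw [if_neg (by omega)]; exact slvc_pos M hm y x h (by omega)
  hC1 := by
    intro x y k hx hy hk
    rw [nV_succ] at hx hy
    rw [dP_succ, slv] at hk
    rcases Nat.lt_trichotomy x y with h | h | h
    · rw [if_pos (by omega)] at hk; exact sC1 M hm x y h (by omega) k hk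
    · subst h; rfl
    · rw [if_neg (by omega)] at hk; exact (sC1 M hm y x h (by omega) k hk).symm
  hC2 := by
    intro x y hx hy hne
    rw [nV_succ] at hx hy
    rw [dP_succ, slv]
    rcases Nat.lt_trichotomy x y with h | h | h
    · rw [if_pos (by omega)]; exact sC2 M hm x y h (by omega)
    · exact absurd h hne
    · rw [if_neg (by omega)]; exact (sC2 M hm y x h (by omega)).symm
  hadj := by
    intro x y hx hy hne
    rw [nV_succ] at hx hy
    rw [slv]
    rcases Nat.lt_trichotomy x y with h | h | h
    · rw [if_pos (by omega)]; exact sadj M hm x y h (by omega)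
    · exact absurd h hne
    · rw [if_neg (by omega)]
      have hs := sadj M hm y x h (by omega)
      constructor
      · intro hS
        rcases hs.1 (sSb_symm M hS) with h' | h'
        · exact Or.inr h'
        · exact Or.inl h'
      · intro hO
        refine sSb_symm M (hs.2 ?_)
        rcases hO with h' | h'
        · exact Or.inr h'
        · exact Or.inl h'
  hns0 := by
    intro x hx hne
    rw [nV_succ] at hx
    rw [slv, if_pos (by omega)]
    exact sns0 M hm x (by omega) (by omega)
  hns1 := by
    intro x hx hne
    rw [nV_succ] at hx hne
    have hn := three_le_nV hm
    rw [nV_succ, show 2 * nV m + 3 - 1 = 2 * nV m + 2 from by omega, slv,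
      if_neg (by omega : ¬ 2 * nV m + 2 ≤ x)]
    exact sns1 M hm x (by omega)

/-- Iterating: a model for every `m ≥ 1`. -/
def mdl : (k : ℕ) → Mdl (k + 1)
  | 0 => base
  | (k + 1) => (mdl k).step (by omega)

end Mdl

/-- From the combinatorial model to a `TreeModel` of the path graph. -/
def Mdl.toTM {m : ℕ} (M : Mdl m) :
    TreeModel (SimpleGraph.pathGraph (nV m)) (dP m) m where
  f := fun v i => M.F v.val i.val
  inj := by
    intro u v h
    by_contra hne
    have hvne : (u : ℕ) ≠ v := fun e => hne (Fin.val_injective e)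
    have hp := M.hlpos u v u.2 v.2 hvne
    have hu := M.hlub u.val v.val
    have hd : 1 ≤ dP m := by rw [dP]; omega
    have := congrFun h ⟨dP m - M.lv u.val v.val, by omega⟩
    exact M.hC2 u v u.2 v.2 hvne this
  col := fun v => ⟨M.colr v, M.hcol v v.2⟩
  S := fun a b l => M.Sb a.val b.val l
  symm := fun a b l h => M.hSsymm a b l h
  adj := by
    intro u v huv
    have hvne : (u : ℕ) ≠ v := fun e => huv (Fin.val_injective e)
    have hp := M.hlpos u v u.2 v.2 hvne
    have hu := M.hlub u.val v.val
    have hpl : prefLen (fun i : Fin (dP m) => M.F u.val i.val)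
        (fun i : Fin (dP m) => M.F v.val i.val) = dP m - M.lv u.val v.val := by
      rw [prefLen, Nat.findGreatest_eq_iff]
      refine ⟨by omega, fun _ i hi => M.hC1 u v i u.2 v.2 hi, ?_⟩
      intro k hk hkd hP
      exact M.hC2 u v u.2 v.2 hvne
        (hP ⟨dP m - M.lv u.val v.val, by omega⟩ hk)
    rw [SimpleGraph.pathGraph_adj]
    show _ ↔ M.Sb _ _ _
    rw [hpl, show dP m - (dP m - M.lv u.val v.val) = M.lv u.val v.val from by omega]
    exact (M.hadj u v u.2 v.2 hvne).symm

/-- For `ℓ = 3·2^m − 4`, the path `P_ℓ` of length `ℓ` (on `ℓ+1` vertices) is in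
`TM(2m+1, m)`. -/
theorem stmt_12 (m : ℕ) (hm : 1 ≤ m) :
    InTM (2 * m + 1) m (SimpleGraph.pathGraph (3 * 2 ^ m - 4 + 1)) := by
  obtain ⟨k, rfl⟩ : ∃ k, m = k + 1 := ⟨m - 1, by omega⟩
  have hnum : 3 * 2 ^ (k + 1) - 4 + 1 = nV (k + 1) := by
    have h := Nat.one_le_two_pow (n := k)
    rw [nV, pow_succ]; omega
  have hdep : 2 * (k + 1) + 1 = dP (k + 1) := rfl
  rw [hnum, hdep]
  exact ⟨(Mdl.mdl k).toTM⟩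
end

section
/- For ℓ = 3·2^m − 4 and every d, the path P_{ℓ+1} of length ℓ+1 has no tree-model with m colours (of any depth d), i.e., P_{3·2^m − 3} ∉ TM(d,m) for all d. -/
lemma prefLen_eq_zero {d : ℕ} (f g : Fin (d+1) → ℕ) (h : f 0 ≠ g 0) :
    prefLen f g = 0 := by
  rw [prefLen, Nat.findGreatest_eq_zero_iff]
  intro n hn _ hP
  exact h (hP 0 (by simpa using hn))

lemma prefLen_tail {d : ℕ} (f g : Fin (d+1) → ℕ) (h : f 0 = g 0) :
    prefLen f g = prefLen (fun i : Fin d => f i.succ) (fun i : Fin d => g i.succ) + 1 := by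
  set p := prefLen (fun i : Fin d => f i.succ) (fun i : Fin d => g i.succ) with hp
  have hple : p ≤ d := Nat.findGreatest_le d
  have hpspec : ∀ i : Fin d, (i : ℕ) < p → f i.succ = g i.succ := by
    have := Nat.findGreatest_spec (P := fun k => ∀ i : Fin d, (i : ℕ) < k →
      (fun i : Fin d => f i.succ) i = (fun i : Fin d => g i.succ) i) (Nat.zero_le d)
      (by intro i hi; exact absurd hi (Nat.not_lt_zero _))
    exact this
  rw [prefLen, Nat.findGreatest_eq_iff]
  refine ⟨by omega, fun _ => ?_, ?_⟩
  · intro i hi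
    induction i using Fin.cases with
    | zero => exact h
    | succ j => exact hpspec j (by simpa using hi)
  · intro n hn hnle hP
    have hP' : ∀ i : Fin d, (i : ℕ) < n - 1 →
        (fun i : Fin d => f i.succ) i = (fun i : Fin d => g i.succ) i := by
      intro i hi
      have h2 : ((i.succ : Fin (d+1)) : ℕ) < n := by
        simp only [Fin.val_succ]; omega
      exact hP i.succ h2
    have := Nat.le_findGreatest (P := fun k => ∀ i : Fin d, (i : ℕ) < k →
      (fun i : Fin d => f i.succ) i = (fun i : Fin d => g i.succ) i) (m := n - 1) (n := d)
      (by omega) hP'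
    have h3 : n - 1 ≤ p := this
    omega

lemma main_bound : ∀ m d N (f : Fin N → Fin d → ℕ) (col : Fin N → ℕ) (S : ℕ → ℕ → ℕ → Prop),
    Function.Injective f →
    (Finset.image col Finset.univ).card ≤ m →
    (∀ u v : Fin N, u ≠ v →
      (((u:ℕ)+1 = (v:ℕ) ∨ (v:ℕ)+1 = (u:ℕ)) ↔ S (col u) (col v) (d - prefLen (f u) (f v)))) →
    N ≤ 3 * 2 ^ m - 3 := by
  intro m
  induction m using Nat.strong_induction_on with
  | _ m IHm =>
  intro d
  induction d with
  | zero =>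
    intro N f col S hinj hcard hadj
    rcases Nat.eq_zero_or_pos N with h | h
    · omega
    · have hm1 : 1 ≤ m := by
        have : 0 < (Finset.image col Finset.univ).card :=
          Finset.card_pos.2 ⟨col ⟨0, h⟩, Finset.mem_image_of_mem _ (Finset.mem_univ _)⟩
        omega
      have hN1 : N ≤ 1 := by
        by_contra h2
        push_neg at h2
        have he : (⟨0, by omega⟩ : Fin N) = ⟨1, by omega⟩ := hinj (funext fun i => i.elim0)
        have := congrArg Fin.val he
        simp at this
      have h2m : 2 ≤ 2^m := by
        calc 2 = 2^1 := rfl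
        _ ≤ 2^m := Nat.pow_le_pow_right (by norm_num) hm1
      omega
  | succ d IHd =>
    intro N f col S hinj hcard hadj
    by_cases hall : ∀ u v : Fin N, f u 0 = f v 0
    · -- all vertices in one class at the root: strip the first level
      apply IHd N (fun u i => f u i.succ) col S
      · intro u v huv
        apply hinj
        funext i
        induction i using Fin.cases with
        | zero => exact hall u v
        | succ j => exact congrFun huv j
      · exact hcard
      · intro u v huv
        have h1 := hadj u v huv
        rwa [prefLen_tail (f u) (f v) (hall u v), Nat.add_sub_add_right] at h1
    · classical
      push_neg at hall
      obtain ⟨u0, v0, hne0⟩ := hall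
      have hNpos : 0 < N := u0.pos
      -- find a crossing consecutive pair
      have hex : ∃ k : ℕ, ∃ h : k + 1 < N, f ⟨k, by omega⟩ 0 ≠ f ⟨k+1, h⟩ 0 := by
        by_contra hc
        push_neg at hc
        have hconst : ∀ i (h : i < N), f ⟨i, h⟩ 0 = f ⟨0, hNpos⟩ 0 := by
          intro i
          induction i with
          | zero => intro h; rfl
          | succ j IH =>
            intro h
            have hj : j < N := by omega
            have h5 := hc j h
            rw [← h5]
            exact IH hj
        have e1 : f u0 0 = f ⟨0, hNpos⟩ 0 := by
          have := hconst u0.val u0.isLt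
          simpa using this
        have e2 : f v0 0 = f ⟨0, hNpos⟩ 0 := by
          have := hconst v0.val v0.isLt
          simpa using this
        exact hne0 (e1.trans e2.symm)
      obtain ⟨k, hk, hcls⟩ := hex
      set vk : Fin N := ⟨k, by omega⟩ with hvk
      set vk1 : Fin N := ⟨k+1, hk⟩ with hvk1
      set a := col vk with ha
      set b := col vk1 with hb
      have hvkv : (vk:ℕ) = k := rfl
      have hvk1v : (vk1:ℕ) = k+1 := rfl
      -- adjacency across classes is determined by colours at level d+1
      have hneq : ∀ u v : Fin N, f u 0 ≠ f v 0 → u ≠ v := fun u v h he => h (he ▸ rfl)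
      have hiff : ∀ u v : Fin N, f u 0 ≠ f v 0 →
          (((u:ℕ)+1 = (v:ℕ) ∨ (v:ℕ)+1 = (u:ℕ)) ↔ S (col u) (col v) (d+1)) := by
        intro u v h
        have h1 := hadj u v (hneq u v h)
        rwa [prefLen_eq_zero (f u) (f v) h, Nat.sub_zero] at h1
      have hS : S a b (d+1) := (hiff vk vk1 hcls).1 (Or.inl rfl)
      have hCons : ∀ x y : Fin N, col x = a → col y = b → f x 0 ≠ f y 0 →
          ((x:ℕ)+1 = (y:ℕ) ∨ (y:ℕ)+1 = (x:ℕ)) := by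
        intro x y hx hy h
        exact (hiff x y h).2 (by rw [hx, hy]; exact hS)
      -- basic cardinality facts
      have hain : a ∈ Finset.image col Finset.univ :=
        Finset.mem_image_of_mem _ (Finset.mem_univ vk)
      have hbin : b ∈ Finset.image col Finset.univ :=
        Finset.mem_image_of_mem _ (Finset.mem_univ vk1)
      have hm1 : 1 ≤ m := by
        have : 0 < (Finset.image col Finset.univ).card := Finset.card_pos.2 ⟨a, hain⟩
        omega
      -- restriction machinery
      have key2 : ∀ (m' s M : ℕ) (B : Finset ℕ), m' < m → ∀ (h2 : s + M ≤ N),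
          B ⊆ Finset.image col Finset.univ → B.card + m' = m →
          (∀ j : Fin M, col ⟨s + (j:ℕ), by omega⟩ ∉ B) →
          M ≤ 3 * 2 ^ m' - 3 := by
        intro m' s M B h1 h2 hBsub hBcard havoid
        have hsub : Finset.image (fun j : Fin M => col ⟨s + (j:ℕ), by omega⟩) Finset.univ ⊆
            Finset.image col Finset.univ \ B := by
          intro y hy
          simp only [Finset.mem_image, Finset.mem_univ, true_and] at hy
          obtain ⟨j, rfl⟩ := hy
          exact Finset.mem_sdiff.2 ⟨Finset.mem_image_of_mem _ (Finset.mem_univ _), havoid j⟩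
        have hcard2 := Finset.card_le_card hsub
        have hcard3 : (Finset.image col Finset.univ \ B).card
            = (Finset.image col Finset.univ).card - B.card := Finset.card_sdiff_of_subset hBsub
        have hfin : (Finset.image (fun j : Fin M => col ⟨s + (j:ℕ), by omega⟩) Finset.univ).card ≤ m' := by
          omega
        refine IHm m' h1 (d+1) M (fun j => f ⟨s + (j:ℕ), by omega⟩)
          (fun j => col ⟨s + (j:ℕ), by omega⟩) S ?_ hfin ?_
        · intro j j' hjj
          have h4 : (⟨s + (j:ℕ), by omega⟩ : Fin N) = ⟨s + (j':ℕ), by omega⟩ := hinj hjj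
          have h5 : s + (j:ℕ) = s + (j':ℕ) := congrArg Fin.val h4
          exact Fin.ext (by omega)
        · intro uu vv huv
          have hne2 : (⟨s + (uu:ℕ), by omega⟩ : Fin N) ≠ (⟨s + (vv:ℕ), by omega⟩ : Fin N) := by
            intro hE
            apply huv
            have h5 : s + (uu:ℕ) = s + (vv:ℕ) := congrArg Fin.val hE
            exact Fin.ext (by omega)
          have h6 := hadj (⟨s + (uu:ℕ), by omega⟩ : Fin N) (⟨s + (vv:ℕ), by omega⟩ : Fin N) hne2
          have h6' : ((s+(uu:ℕ))+1 = s+(vv:ℕ) ∨ (s+(vv:ℕ))+1 = s+(uu:ℕ)) ↔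
              S (col ⟨s + (uu:ℕ), by omega⟩) (col ⟨s + (vv:ℕ), by omega⟩)
                ((d+1) - prefLen (f ⟨s + (uu:ℕ), by omega⟩) (f ⟨s + (vv:ℕ), by omega⟩)) := h6
          constructor
          · intro h7
            refine h6'.1 ?_
            rcases h7 with h7 | h7
            · exact Or.inl (by omega)
            · exact Or.inr (by omega)
          · intro h7
            rcases h6'.2 h7 with h8 | h8
            · exact Or.inl (by omega)
            · exact Or.inr (by omega)
      by_contra hNb
      push_neg at hNb
      have h2m : 2^(m-1) * 2 = 2^m := by
        rw [← pow_succ]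
        congr 1
        omega
      have hp1 : 0 < 2^(m-1) := Nat.pow_pos (by norm_num)
      -- Step C : a colour whose occurrences all lie in a window of 3 gives a long colour-free segment
      have stepC : ∀ c : ℕ, (∃ x0 : Fin N, col x0 = c) →
          (∀ x y : Fin N, col x = c → col y = c → (x:ℕ) + 3 ≤ (y:ℕ) → False) → False := by
        intro c hex0 hnf
        obtain ⟨x0, hx0⟩ := hex0
        have hne : (Finset.image (fun x : Fin N => (x:ℕ))
            (Finset.univ.filter (fun x => col x = c))).Nonempty :=
          ⟨(x0:ℕ), Finset.mem_image_of_mem _ (by simp [hx0])⟩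
        set t := Finset.min' _ hne with htdef
        have htmem := Finset.min'_mem _ hne
        rw [Finset.mem_image] at htmem
        obtain ⟨xt, hxtmem, hxtval⟩ := htmem
        rw [Finset.mem_filter] at hxtmem
        have hxt : col xt = c := hxtmem.2
        have htle : ∀ x : Fin N, col x = c → t ≤ (x:ℕ) := by
          intro x hx
          exact Finset.min'_le _ _ (Finset.mem_image_of_mem _ (by simp [hx]))
        have htub : ∀ x : Fin N, col x = c → (x:ℕ) ≤ t + 2 := by
          intro x hx
          by_contra h8
          push_neg at h8
          exact hnf xt x hxt hx (by omega)
        have hcmem : c ∈ Finset.image col Finset.univ := hx0 ▸ Finset.mem_image_of_mem _ (Finset.mem_univ x0)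
        have htltN : t < N := by rw [htdef, ← hxtval]; exact xt.isLt
        have hseg : 3 * 2^(m-1) - 2 ≤ t ∨ 3 * 2^(m-1) - 2 ≤ N - t - 3 := by
          by_contra h9
          push_neg at h9
          omega
        rcases hseg with hseg | hseg
        · have hb2 := key2 (m-1) 0 t {c} (by omega) (by omega)
            (Finset.singleton_subset_iff.2 hcmem) (by simp; omega) ?_
          · omega
          · intro j hj
            rw [Finset.mem_singleton] at hj
            have h10 : t ≤ 0 + (j:ℕ) := htle _ hj
            omega
        · have hb2 := key2 (m-1) (t+3) (N-t-3) {c} (by omega) (by omega)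
            (Finset.singleton_subset_iff.2 hcmem) (by simp; omega) ?_
          · omega
          · intro j hj
            rw [Finset.mem_singleton] at hj
            have h10 : t + 3 + (j:ℕ) ≤ t + 2 := htub _ hj
            omega
      -- main case analysis on far pairs
      by_cases hfa : ∀ x y : Fin N, col x = a → col y = a → (x:ℕ)+3 ≤ (y:ℕ) → False
      · exact absurd (stepC a ⟨vk, rfl⟩ hfa) (by simp)
      by_cases hfb : ∀ x y : Fin N, col x = b → col y = b → (x:ℕ)+3 ≤ (y:ℕ) → False
      · exact absurd (stepC b ⟨vk1, rfl⟩ hfb) (by simp)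
      push_neg at hfa hfb
      obtain ⟨u, u', hu, hu', huu, -⟩ := hfa
      obtain ⟨w, w', hw, hw', hww, -⟩ := hfb
      by_cases hab : a = b
      · -- one colour on both sides of the crossing: all its occurrences in a window of 3
        have W : ∀ x : Fin N, col x = a →
            (k ≤ (x:ℕ)+1 ∧ (x:ℕ) ≤ k+2) ∧ ((x:ℕ)+1 = k → f x 0 = f vk1 0) ∧
            ((x:ℕ) = k+2 → f x 0 = f vk 0) := by
          intro x hx
          by_cases h1 : f x 0 = f vk 0
          · have h2 : f x 0 ≠ f vk1 0 := h1 ▸ hcls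
            have h3 := hCons x vk1 hx hb.symm h2
            rw [hvk1v] at h3
            refine ⟨by omega, fun h4 => by omega, fun _ => h1⟩
          · have h3 := hCons x vk hx (ha.symm.trans hab) h1
            rw [hvkv] at h3
            rcases h3 with h3 | h3
            · have h4 : f x 0 = f vk1 0 := by
                by_contra h5
                have h6 := hCons x vk1 hx hb.symm h5
                rw [hvk1v] at h6
                omega
              exact ⟨by omega, fun _ => h4, fun h7 => by omega⟩
            · have h4 : x = vk1 := Fin.ext (by rw [hvk1v]; omega)
              refine ⟨by omega, fun h5 => by omega, fun h5 => by omega⟩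
        obtain ⟨⟨e1, e2⟩, e3, -⟩ := W u hu
        obtain ⟨⟨e1', e2'⟩, -, e4'⟩ := W u' hu'
        have h5 : (u:ℕ)+1 = k ∧ (u':ℕ) = k+2 := by omega
        have h6 : f u 0 = f vk1 0 := e3 h5.1
        have h7 : f u' 0 = f vk 0 := e4' h5.2
        have h8 := hCons u' u hu' (hu.trans hab) (by rw [h6, h7]; exact hcls)
        omega
      · -- two different colours a,b with far pairs: forces a rigid double-crossing picture
        have hm2 : 2 ≤ m := by
          have hsub2 : ({a, b} : Finset ℕ) ⊆ Finset.image col Finset.univ := by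
            intro y hy
            rcases Finset.mem_insert.1 hy with h | h
            · exact h ▸ hain
            · exact (Finset.mem_singleton.1 h) ▸ hbin
          have hc2 : ({a, b} : Finset ℕ).card = 2 := Finset.card_pair hab
          have := Finset.card_le_card hsub2
          omega
        have F1 : ∀ x : Fin N, col x = a → f x 0 = f w 0 ∨ f x 0 = f w' 0 := by
          intro x hx
          by_contra hcn
          push_neg at hcn
          have c1 := hCons x w hx hw hcn.1
          have c2 := hCons x w' hx hw' hcn.2
          omega
        have F2 : ∀ y : Fin N, col y = b → f y 0 = f u 0 ∨ f y 0 = f u' 0 := by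
          intro y hy
          by_contra hcn
          push_neg at hcn
          have c1 := hCons u y hu hy (fun hE => hcn.1 hE.symm)
          have c2 := hCons u' y hu' hy (fun hE => hcn.2 hE.symm)
          omega
        have F3 : f w 0 ≠ f w' 0 := by
          intro hE
          have g1 := F1 vk ha.symm
          have g2 := F1 u hu
          have g3 := F1 u' hu'
          have g4 := F2 vk1 hb.symm
          rw [← hE] at g1 g2 g3
          have g5 : f vk 0 = f w 0 := g1.elim id id
          have g6 : f u 0 = f w 0 := g2.elim id id
          have g7 : f u' 0 = f w 0 := g3.elim id id
          rcases g4 with g4 | g4 <;> [rw [g6] at g4; rw [g7] at g4] <;>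
            exact hcls (g5.trans g4.symm)
        have F4 : f u 0 ≠ f u' 0 := by
          intro hE
          have g1 := F2 vk1 hb.symm
          have g2 := F2 w hw
          have g3 := F2 w' hw'
          rw [← hE] at g1 g2 g3
          have g5 : f vk1 0 = f u 0 := g1.elim id id
          have g6 : f w 0 = f u 0 := g2.elim id id
          have g7 : f w' 0 = f u 0 := g3.elim id id
          have g8 := F1 vk ha.symm
          rcases g8 with g8 | g8 <;> [rw [g6] at g8; rw [g7] at g8] <;>
            exact hcls (g8.trans g5.symm)
        have ORI : f u 0 = f w' 0 ∧ f u' 0 = f w 0 := by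
          rcases F1 u hu with h1 | h1 <;> rcases F1 u' hu' with h2 | h2
          · exact absurd (h1.trans h2.symm) F4
          · exfalso
            have c1 := hCons u w' hu hw' (by rw [h1]; exact F3)
            have c2 := hCons u' w hu' hw (by rw [h2]; exact F3.symm)
            omega
          · exact ⟨h1, h2⟩
          · exact absurd (h1.trans h2.symm) F4
        obtain ⟨O1, O2⟩ := ORI
        have cuw : (u:ℕ)+1 = (w:ℕ) ∨ (w:ℕ)+1 = (u:ℕ) :=
          hCons u w hu hw (by rw [O1]; exact F3.symm)
        have cu'w' : (u':ℕ)+1 = (w':ℕ) ∨ (w':ℕ)+1 = (u':ℕ) :=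
          hCons u' w' hu' hw' (by rw [O2]; exact F3)
        set c1 := min (u:ℕ) (w:ℕ) with hc1
        set c2 := min (u':ℕ) (w':ℕ) with hc2
        have WIN : ∀ x : Fin N, col x = a ∨ col x = b →
            (c1 ≤ (x:ℕ)+1 ∧ (x:ℕ) ≤ c1+2) ∨ (c2 ≤ (x:ℕ)+1 ∧ (x:ℕ) ≤ c2+2) := by
          intro x hx
          rcases hx with hx | hx
          · rcases F1 x hx with h1 | h1
            · have c3 := hCons x w' hx hw' (by rw [h1]; exact F3)
              right
              omega
            · have c3 := hCons x w hx hw (by rw [h1]; exact F3.symm)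
              left
              omega
          · rcases F2 x hx with h1 | h1
            · have c3 := hCons u' x hu' hx (by rw [h1]; exact F4.symm)
              right
              omega
            · have c3 := hCons u x hu hx (by rw [h1]; exact F4)
              left
              omega
        have hc12 : c1 + 3 ≤ c2 := by omega
        have h4m : 2^(m-2) * 2 = 2^(m-1) := by
          rw [← pow_succ]
          congr 1
          omega
        have hp2 : 0 < 2^(m-2) := Nat.pow_pos (by norm_num)
        have hBsub : ({a, b} : Finset ℕ) ⊆ Finset.image col Finset.univ := by
          intro y hy
          rcases Finset.mem_insert.1 hy with h | h
          · exact h ▸ hain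
          · exact (Finset.mem_singleton.1 h) ▸ hbin
        have hBcard : ({a, b} : Finset ℕ).card + (m-2) = m := by
          rw [Finset.card_pair hab]
          omega
        have huN : (u:ℕ) < N := u.isLt
        have hu'N : (u':ℕ) < N := u'.isLt
        have htri : 3 * 2^(m-2) - 2 ≤ c1 - 1 ∨ 3 * 2^(m-2) - 2 ≤ c2 - c1 - 4 ∨
            3 * 2^(m-2) - 2 ≤ N - c2 - 3 := by
          by_contra h9
          push_neg at h9
          omega
        have havoidgen : ∀ (p : ℕ) (hp : p < N),
            (p + 1 < c1 ∨ (c1 + 2 < p ∧ p + 1 < c2) ∨ c2 + 2 < p) → col ⟨p, hp⟩ ∉ ({a, b} : Finset ℕ) := by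
          intro p hp hloc hmem
          have hx : col ⟨p, hp⟩ = a ∨ col ⟨p, hp⟩ = b := by
            rcases Finset.mem_insert.1 hmem with h | h
            · exact Or.inl h
            · exact Or.inr (Finset.mem_singleton.1 h)
          have h12 : (c1 ≤ p+1 ∧ p ≤ c1+2) ∨ (c2 ≤ p+1 ∧ p ≤ c2+2) := WIN ⟨p, hp⟩ hx
          omega
        rcases htri with hL | hL | hL
        · have hb2 := key2 (m-2) 0 (c1-1) {a, b} (by omega) (by omega) hBsub hBcard ?_
          · omega
          · intro j
            exact havoidgen (0 + (j:ℕ)) (by omega) (by omega)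
        · have hb2 := key2 (m-2) (c1+3) (c2-c1-4) {a, b} (by omega) (by omega) hBsub hBcard ?_
          · omega
          · intro j
            exact havoidgen ((c1+3) + (j:ℕ)) (by omega) (by omega)
        · have hb2 := key2 (m-2) (c2+3) (N-c2-3) {a, b} (by omega) (by omega) hBsub hBcard ?_
          · omega
          · intro j
            exact havoidgen ((c2+3) + (j:ℕ)) (by omega) (by omega)

/-- For `ℓ = 3·2^m − 4`, the path `P_{ℓ+1}` of length `ℓ+1 = 3·2^m − 3` has no
tree-model with `m` colours of any depth `d`. -/
theorem stmt_13 (m d : ℕ) :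
    ¬ InTM d m (SimpleGraph.pathGraph (3 * 2 ^ m - 3 + 1)) := by
  rintro ⟨M⟩
  set N := 3 * 2 ^ m - 3 + 1 with hN
  have h2m : 1 ≤ 2 ^ m := Nat.pow_pos (by norm_num)
  let col' : Fin N → ℕ := fun v => (M.col v : ℕ)
  let S' : ℕ → ℕ → ℕ → Prop := fun x y l => ∃ (hx : x < m) (hy : y < m), M.S ⟨x, hx⟩ ⟨y, hy⟩ l
  have hcard : (Finset.image col' Finset.univ).card ≤ m := by
    have hsub : Finset.image col' Finset.univ ⊆ Finset.range m := by
      intro x hx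
      simp only [Finset.mem_image] at hx
      obtain ⟨v, -, rfl⟩ := hx
      exact Finset.mem_range.2 (M.col v).isLt
    have := Finset.card_le_card hsub
    simpa using this
  have hadj : ∀ u v : Fin N, u ≠ v →
      (((u:ℕ)+1 = (v:ℕ) ∨ (v:ℕ)+1 = (u:ℕ)) ↔ S' (col' u) (col' v) (d - prefLen (M.f u) (M.f v))) := by
    intro u v huv
    rw [← SimpleGraph.pathGraph_adj, M.adj u v huv]
    constructor
    · intro h
      exact ⟨(M.col u).isLt, (M.col v).isLt, by simpa using h⟩
    · rintro ⟨hx, hy, h⟩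
      simpa using h
  have hfin := main_bound m d N M.f col' S' M.inj hcard hadj
  omega
end

section
/- Any class of vertex-coloured graphs (with colours from a finite set C) of bounded shrub-depth is well-quasi-ordered under the colour-preserving induced subgraph relation. -/
namespace Shrub

lemma prefLen_spec {d : ℕ} (f g : Fin d → ℕ) :
    ∀ i : Fin d, (i : ℕ) < prefLen f g → f i = g i := by
  rcases Nat.eq_zero_or_pos (prefLen f g) with h0 | h0
  · intro i hi; omega
  · exact (Nat.findGreatest_eq_iff.1 (rfl : prefLen f g = _)).2.1 (by omega)

lemma prefLen_self {d : ℕ} (f : Fin d → ℕ) : prefLen f f = d :=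
  le_antisymm (Nat.findGreatest_le d) (Nat.le_findGreatest le_rfl (fun _ _ => rfl))

lemma prefLen_le {d : ℕ} (f g : Fin d → ℕ) : prefLen f g ≤ d := Nat.findGreatest_le d

lemma eq_of_prefLen_eq {d : ℕ} {f g : Fin d → ℕ} (h : prefLen f g = d) : f = g := by
  funext i
  exact prefLen_spec f g i (by omega)

lemma prefLen_cons_same {d : ℕ} (a : ℕ) (g h : Fin d → ℕ) :
    prefLen (Fin.cons a g) (Fin.cons a h) = prefLen g h + 1 := by
  set P : ℕ → Prop := fun k => ∀ i : Fin d, (i : ℕ) < k → g i = h i with hP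
  have hnle : prefLen g h ≤ d := prefLen_le g h
  have hPn : ∀ i : Fin d, (i : ℕ) < prefLen g h → g i = h i := prefLen_spec g h
  rw [prefLen, Nat.findGreatest_eq_iff]
  refine ⟨by omega, fun _ => ?_, fun k hk hkd hPk => ?_⟩
  · intro i hi
    refine Fin.cases ?_ (fun i' hi' => ?_) i hi
    · simp
    · simp only [Fin.cons_succ]
      exact hPn i' (by simpa using hi')
  · obtain ⟨k', rfl⟩ : ∃ k', k = k' + 1 := ⟨k - 1, by omega⟩
    have hk' : P k' := by
      intro i hi
      have := hPk i.succ (by simpa using hi)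
      simpa using this
    have hdef : Nat.findGreatest P d = prefLen g h := rfl
    exact Nat.findGreatest_is_greatest (n := d) (by omega) (by omega) hk'

lemma prefLen_cons_ne {d : ℕ} {a b : ℕ} (hab : a ≠ b) (g h : Fin d → ℕ) :
    prefLen (Fin.cons a g) (Fin.cons b h) = 0 := by
  rw [prefLen, Nat.findGreatest_eq_iff]
  refine ⟨by omega, by simp, fun k hk _ hPk => ?_⟩
  exact hab (by simpa using hPk 0 hk)

lemma prefLen_head_ne {d : ℕ} {g h : Fin (d+1) → ℕ} (hne : g 0 ≠ h 0) : prefLen g h = 0 := by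
  rw [prefLen, Nat.findGreatest_eq_iff]
  refine ⟨by omega, by simp, fun k hk _ hPk => ?_⟩
  exact hne (by simpa using hPk 0 (by simpa using hk))

variable (L : Type)

def Tr : ℕ → Type
  | 0 => Option L
  | d+1 => List (ℕ × Tr d)

def tle : (d : ℕ) → Tr L d → Tr L d → Prop
  | 0, a, b => ∀ x : L, a = some x → b = some x
  | d+1, ts, ts' => List.SublistForall₂ (fun a b : ℕ × Tr L d => tle d a.2 b.2) ts ts'

def wf : (d : ℕ) → Tr L d → Prop
  | 0, _ => True
  | d+1, ts =>
    let l : List (ℕ × Tr L d) := ts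
    (List.map Prod.fst l).Nodup ∧ ∀ x ∈ l, wf d x.2

def lf {d : ℕ} (rec : Tr L d → List ((Fin d → ℕ) × L)) :
    List (ℕ × Tr L d) → List ((Fin (d+1) → ℕ) × L)
  | [] => []
  | (k, t) :: ts => ((rec t).map fun x => (Fin.cons k x.1, x.2)) ++ lf rec ts

def leaves : (d : ℕ) → Tr L d → List ((Fin d → ℕ) × L)
  | 0, a => Option.elim a [] (fun x => [(Fin.elim0, x)])
  | d+1, ts => lf L (leaves d) ts

variable {L}

lemma tle_refl : ∀ (d : ℕ) (t : Tr L d), tle L d t t := by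
  intro d
  induction d with
  | zero => intro t x hx; exact hx
  | succ d ih =>
    intro t
    show List.SublistForall₂ _ (t : List (ℕ × Tr L d)) t
    refine List.sublistForall₂_iff.2 ?_
    exact ⟨t, List.forall₂_same.2 (fun x _ => ih x.2), List.Sublist.refl t⟩

lemma tle_trans : ∀ (d : ℕ) (a b c : Tr L d), tle L d a b → tle L d b c → tle L d a c := by
  intro d
  induction d with
  | zero => intro a b c hab hbc x hx; exact hbc x (hab x hx)
  | succ d ih =>
    intro a b c hab hbc
    haveI : IsTrans (ℕ × Tr L d) (fun a b : ℕ × Tr L d => tle L d a.2 b.2) :=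
      ⟨fun x y z => ih x.2 y.2 z.2⟩
    exact _root_.trans (r := List.SublistForall₂ (fun a b : ℕ × Tr L d => tle L d a.2 b.2)) hab hbc

lemma tr_finite [Fintype L] : Finite (Tr L 0) := by
  show Finite (Option L); exact Finite.of_fintype _

lemma tle_pwo [Fintype L] : ∀ d : ℕ,
    Set.PartiallyWellOrderedOn (Set.univ : Set (Tr L d)) (tle L d) := by
  intro d
  induction d with
  | zero =>
    rw [Set.partiallyWellOrderedOn_iff_exists_lt]
    intro f _
    haveI := tr_finite (L := L)
    obtain ⟨i, j, hne, hij⟩ := Finite.exists_ne_map_eq_of_infinite f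
    rcases lt_or_gt_of_ne hne with h | h
    · exact ⟨i, j, h, hij ▸ tle_refl 0 (f i)⟩
    · exact ⟨j, i, h, hij ▸ tle_refl 0 (f j)⟩
  | succ d ih =>
    haveI : IsRefl (ℕ × Tr L d) (fun a b : ℕ × Tr L d => tle L d a.2 b.2) :=
      ⟨fun x => tle_refl d x.2⟩
    haveI : IsTrans (ℕ × Tr L d) (fun a b : ℕ × Tr L d => tle L d a.2 b.2) :=
      ⟨fun x y z => tle_trans d x.2 y.2 z.2⟩
    have hp : Set.PartiallyWellOrderedOn (Set.univ : Set (ℕ × Tr L d))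
        (fun a b : ℕ × Tr L d => tle L d a.2 b.2) := by
      rw [Set.partiallyWellOrderedOn_iff_exists_lt]
      intro f _
      obtain ⟨i, j, hij, hle⟩ := ih.exists_lt (f := fun n => (f n).2) (fun _ => Set.mem_univ _)
      exact ⟨i, j, hij, hle⟩
    haveI : IsPreorder (ℕ × Tr L d) (fun a b : ℕ × Tr L d => tle L d a.2 b.2) :=
      { refl := fun x => tle_refl d x.2, trans := fun x y z => tle_trans d x.2 y.2 z.2 }
    have := hp.partiallyWellOrderedOn_sublistForall₂
      (r := fun a b : ℕ × Tr L d => tle L d a.2 b.2)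
    rw [Set.partiallyWellOrderedOn_iff_exists_lt]
    intro f _
    obtain ⟨i, j, hij, hle⟩ := this.exists_lt (f := fun n => (f n : List (ℕ × Tr L d)))
      (fun n x _ => Set.mem_univ x)
    exact ⟨i, j, hij, hle⟩

lemma head_mem_of_mem_lf {d : ℕ} (rec : Tr L d → List ((Fin d → ℕ) × L))
    (ts : List (ℕ × Tr L d)) (x : (Fin (d+1) → ℕ) × L) (hx : x ∈ lf L rec ts) :
    x.1 0 ∈ ts.map Prod.fst := by
  induction ts with
  | nil => simpa [lf] using hx
  | cons a ts ih =>
    obtain ⟨k, t⟩ := a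
    simp only [lf, List.mem_append, List.mem_map] at hx
    rcases hx with ⟨y, _, rfl⟩ | hx
    · simp [Fin.cons_zero]
    · simp only [List.map_cons, List.mem_cons]
      exact Or.inr (ih hx)

/-- The conclusion of the embedding lemma. -/
def EmbCl (d : ℕ) (l l' : List ((Fin d → ℕ) × L)) : Prop :=
  ∃ p : List (((Fin d → ℕ) × L) × ((Fin d → ℕ) × L)),
    p.map Prod.fst = l ∧
    (p.map Prod.snd).Sublist l' ∧
    (∀ x ∈ p, x.1.2 = x.2.2) ∧
    (∀ x ∈ p, ∀ y ∈ p, prefLen x.1.1 y.1.1 = prefLen x.2.1 y.2.1)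

lemma emb_zero (t t' : Option L) (h : ∀ x : L, t = some x → t' = some x) :
    EmbCl 0 (leaves L 0 t) (leaves L 0 t') := by
  cases t with
  | none => exact ⟨[], rfl, List.nil_sublist _, by simp, by simp⟩
  | some a =>
    rw [h a rfl]
    refine ⟨[((Fin.elim0, a), (Fin.elim0, a))], rfl, ?_, by simp, ?_⟩
    · exact List.Sublist.refl _
    · intro x hx y hy
      simp only [List.mem_singleton] at hx hy
      subst hx; subst hy
      rfl

lemma emb_succ (d : ℕ)
    (ih : ∀ t t' : Tr L d, wf L d t → wf L d t' → tle L d t t' →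
      EmbCl d (leaves L d t) (leaves L d t')) :
    ∀ ts ts' : List (ℕ × Tr L d),
      List.SublistForall₂ (fun a b : ℕ × Tr L d => tle L d a.2 b.2) ts ts' →
      (ts.map Prod.fst).Nodup → (ts'.map Prod.fst).Nodup →
      (∀ x ∈ ts, wf L d x.2) → (∀ x ∈ ts', wf L d x.2) →
      EmbCl (d+1) (lf L (leaves L d) ts) (lf L (leaves L d) ts') := by
  intro ts ts' h
  induction h with
  | nil =>
    intro _ _ _ _
    exact ⟨[], rfl, List.nil_sublist _, by simp, by simp⟩
  | @cons a₁ a₂ l₁ l₂ hr hsub ihh =>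
    intro hn hn' hw hw'
    obtain ⟨k, t⟩ := a₁
    obtain ⟨k', t'⟩ := a₂
    simp only [List.map_cons, List.nodup_cons] at hn hn'
    obtain ⟨p₀, hp₀f, hp₀s, hp₀l, hp₀p⟩ :=
      ih t t' (hw (k, t) (List.mem_cons_self)) (hw' (k', t') (List.mem_cons_self)) hr
    obtain ⟨p₁, hp₁f, hp₁s, hp₁l, hp₁p⟩ :=
      ihh hn.2 hn'.2 (fun x hx => hw x (List.mem_cons_of_mem _ hx))
        (fun x hx => hw' x (List.mem_cons_of_mem _ hx))
    refine ⟨p₀.map (fun x => (((Fin.cons k x.1.1 : Fin (d+1) → ℕ), x.1.2),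
        ((Fin.cons k' x.2.1 : Fin (d+1) → ℕ), x.2.2))) ++ p₁,
      ?_, ?_, ?_, ?_⟩
    · show _ = ((leaves L d t).map fun x => ((Fin.cons k x.1 : Fin (d+1) → ℕ), x.2))
        ++ lf L (leaves L d) l₁
      rw [List.map_append, ← hp₀f, ← hp₁f, List.map_map, List.map_map]
      rfl
    · show List.Sublist _ (((leaves L d t').map
        fun x => ((Fin.cons k' x.1 : Fin (d+1) → ℕ), x.2)) ++ lf L (leaves L d) l₂)
      rw [List.map_append, List.map_map]
      refine List.Sublist.append ?_ hp₁s
      have := List.Sublist.map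
        (f := fun x : (Fin d → ℕ) × L => ((Fin.cons k' x.1 : Fin (d+1) → ℕ), x.2)) hp₀s
      rw [List.map_map] at this
      exact this
    · intro x hx
      rcases List.mem_append.1 hx with hx | hx
      · obtain ⟨y, hy, rfl⟩ := List.mem_map.1 hx
        exact hp₀l y hy
      · exact hp₁l x hx
    · -- the prefix-length condition
      have memf : ∀ x ∈ p₁, (x.1.1 : Fin (d+1) → ℕ) 0 ∈ l₁.map Prod.fst := by
        intro x hx
        have : x.1 ∈ lf L (leaves L d) l₁ := hp₁f ▸ List.mem_map_of_mem (f := Prod.fst) hx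
        exact head_mem_of_mem_lf _ _ _ this
      have mems : ∀ x ∈ p₁, (x.2.1 : Fin (d+1) → ℕ) 0 ∈ l₂.map Prod.fst := by
        intro x hx
        have : x.2 ∈ lf L (leaves L d) l₂ :=
          hp₁s.subset (List.mem_map_of_mem (f := Prod.snd) hx)
        exact head_mem_of_mem_lf _ _ _ this
      intro x hx y hy
      rcases List.mem_append.1 hx with hx | hx <;> rcases List.mem_append.1 hy with hy | hy
      · obtain ⟨x₀, hx₀, rfl⟩ := List.mem_map.1 hx
        obtain ⟨y₀, hy₀, rfl⟩ := List.mem_map.1 hy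
        simp only [prefLen_cons_same]
        rw [hp₀p x₀ hx₀ y₀ hy₀]
      · obtain ⟨x₀, hx₀, rfl⟩ := List.mem_map.1 hx
        have h1 : (Fin.cons k x₀.1.1 : Fin (d+1) → ℕ) 0 ≠ y.1.1 0 := by
          simp only [Fin.cons_zero]
          intro hkk; exact hn.1 (hkk ▸ memf y hy)
        have h2 : (Fin.cons k' x₀.2.1 : Fin (d+1) → ℕ) 0 ≠ y.2.1 0 := by
          simp only [Fin.cons_zero]
          intro hkk; exact hn'.1 (hkk ▸ mems y hy)
        rw [prefLen_head_ne h1, prefLen_head_ne h2]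
      · obtain ⟨y₀, hy₀, rfl⟩ := List.mem_map.1 hy
        have h1 : x.1.1 0 ≠ (Fin.cons k y₀.1.1 : Fin (d+1) → ℕ) 0 := by
          simp only [Fin.cons_zero]
          intro hkk; exact hn.1 (hkk ▸ memf x hx)
        have h2 : x.2.1 0 ≠ (Fin.cons k' y₀.2.1 : Fin (d+1) → ℕ) 0 := by
          simp only [Fin.cons_zero]
          intro hkk; exact hn'.1 (hkk ▸ mems x hx)
        rw [prefLen_head_ne h1, prefLen_head_ne h2]
      · exact hp₁p x hx y hy
  | @cons_right a l₁ l₂ hsub ihh =>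
    intro hn hn' hw hw'
    obtain ⟨k, t⟩ := a
    simp only [List.map_cons, List.nodup_cons] at hn'
    obtain ⟨p, hpf, hps, hpl, hpp⟩ :=
      ihh hn hn'.2 hw (fun x hx => hw' x (List.mem_cons_of_mem _ hx))
    have hstep : (lf L (leaves L d) l₂).Sublist (lf L (leaves L d) ((k, t) :: l₂)) := by
      show (lf L (leaves L d) l₂).Sublist
        (((leaves L d t).map fun x => (Fin.cons k x.1, x.2)) ++ lf L (leaves L d) l₂)
      exact List.sublist_append_right _ _
    exact ⟨p, hpf, hps.trans hstep, hpl, hpp⟩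

lemma emb_of_tle : ∀ (d : ℕ) (t t' : Tr L d), wf L d t → wf L d t' → tle L d t t' →
    EmbCl d (leaves L d t) (leaves L d t') := by
  intro d
  induction d with
  | zero => exact fun t t' _ _ h => emb_zero t t' h
  | succ d ih =>
    intro t t' hw hw' h
    exact emb_succ d ih t t' h hw.1 hw'.1 hw.2 hw'.2

lemma encode_aux (d : ℕ)
    (ih : ∀ l : List ((Fin d → ℕ) × L), (l.map Prod.fst).Nodup →
      ∃ t : Tr L d, wf L d t ∧ (leaves L d t : Multiset ((Fin d → ℕ) × L)) = ↑l) :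
    ∀ (n : ℕ) (l : List ((Fin (d+1) → ℕ) × L)), l.length ≤ n → (l.map Prod.fst).Nodup →
      ∃ ts : List (ℕ × Tr L d), wf L (d+1) (ts : Tr L (d+1)) ∧
        (lf L (leaves L d) ts : Multiset ((Fin (d+1) → ℕ) × L)) = ↑l ∧
        ∀ k' ∈ ts.map Prod.fst, ∃ y ∈ l, y.1 0 = k' := by
  intro n
  induction n with
  | zero =>
    intro l hl _
    rw [Nat.le_zero, List.length_eq_zero_iff] at hl
    subst hl
    exact ⟨[], ⟨by simp, by simp⟩, rfl, by simp⟩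
  | succ n ihn =>
    intro l hl hnd
    cases l with
    | nil => exact ⟨[], ⟨by simp, by simp⟩, rfl, by simp⟩
    | cons x rest =>
      set l := x :: rest with hldef
      set k := x.1 0 with hk
      set p : (Fin (d+1) → ℕ) × L → Bool := fun y => decide (y.1 0 = k) with hp
      set l₁ := l.filter p with hl₁
      set l₂ := l.filter (fun y => !p y) with hl₂
      have hperm : List.Perm (l₁ ++ l₂) l := List.filter_append_perm p l
      have hx1 : x ∈ l₁ := by
        rw [hl₁, List.mem_filter]
        exact ⟨List.mem_cons_self, by simp [hp, hk]⟩
      have hlen2 : l₂.length ≤ n := by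
        have := hperm.length_eq
        rw [List.length_append] at this
        have hx1len : 1 ≤ l₁.length := List.length_pos_iff.2 (List.ne_nil_of_mem hx1)
        have : l.length ≤ n + 1 := hl
        omega
      have hsub1 : l₁.Sublist l := List.filter_sublist (l := l)
      have hsub2 : l₂.Sublist l := List.filter_sublist (l := l)
      have hnd1 : (l₁.map Prod.fst).Nodup := hnd.sublist (hsub1.map _)
      have hnd2 : (l₂.map Prod.fst).Nodup := hnd.sublist (hsub2.map _)
      obtain ⟨ts₂, hw₂, hm₂, hh₂⟩ := ihn l₂ hlen2 hnd2
      -- the tails of l₁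
      set l₁' : List ((Fin d → ℕ) × L) := l₁.map (fun y => (Fin.tail y.1, y.2)) with hl₁'
      have hhead1 : ∀ y ∈ l₁, y.1 0 = k := by
        intro y hy
        rw [hl₁, List.mem_filter] at hy
        simpa [hp] using hy.2
      have hnd1' : (l₁'.map Prod.fst).Nodup := by
        rw [hl₁', List.map_map]
        have : (Prod.fst ∘ fun y : (Fin (d+1) → ℕ) × L => ((Fin.tail y.1 : Fin d → ℕ), y.2))
            = (fun g : Fin (d+1) → ℕ => (Fin.tail g : Fin d → ℕ)) ∘ Prod.fst := rfl
        rw [this, ← List.map_map]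
        refine List.Nodup.map_on ?_ hnd1
        intro a ha b hb htail
        obtain ⟨ya, hya, rfl⟩ := List.mem_map.1 ha
        obtain ⟨yb, hyb, rfl⟩ := List.mem_map.1 hb
        have : Fin.cons (ya.1 0) (Fin.tail ya.1) = Fin.cons (yb.1 0) (Fin.tail yb.1) := by
          rw [hhead1 ya hya, hhead1 yb hyb, htail]
        rwa [Fin.cons_self_tail, Fin.cons_self_tail] at this
      obtain ⟨t₁, hw₁, hm₁⟩ := ih l₁' hnd1'
      refine ⟨(k, t₁) :: ts₂, ⟨?_, ?_⟩, ?_, ?_⟩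
      · -- nodup heads
        show (k :: ts₂.map Prod.fst).Nodup
        rw [List.nodup_cons]
        refine ⟨?_, hw₂.1⟩
        intro hmem
        obtain ⟨y, hy, hyk⟩ := hh₂ k hmem
        rw [hl₂, List.mem_filter] at hy
        have : ¬ (y.1 0 = k) := by simpa [hp] using hy.2
        exact this hyk
      · -- children wf
        intro z hz
        rcases List.mem_cons.1 hz with rfl | hz
        · exact hw₁
        · exact hw₂.2 z hz
      · -- multiset equality
        show ((((leaves L d t₁).map fun y => (Fin.cons k y.1, y.2)) ++ lf L (leaves L d) ts₂ :
          List ((Fin (d+1) → ℕ) × L)) : Multiset ((Fin (d+1) → ℕ) × L))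
          = (l : Multiset ((Fin (d+1) → ℕ) × L))
        rw [← Multiset.coe_eq_coe.2 hperm, Multiset.coe_eq_coe]
        refine List.Perm.append ?_ (Multiset.coe_eq_coe.1 hm₂)
        have h1 : List.Perm (leaves L d t₁) l₁' := Multiset.coe_eq_coe.1 hm₁
        have h2 := h1.map (fun y : (Fin d → ℕ) × L => ((Fin.cons k y.1 : Fin (d+1) → ℕ), y.2))
        have h3 : l₁.map ((fun y : (Fin d → ℕ) × L => ((Fin.cons k y.1 : Fin (d+1) → ℕ), y.2))
            ∘ (fun y : (Fin (d+1) → ℕ) × L => ((Fin.tail y.1 : Fin d → ℕ), y.2))) = l₁ := by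
          conv_rhs => rw [← List.map_id l₁]
          refine List.map_congr_left ?_
          intro y hy
          show ((Fin.cons k (Fin.tail y.1) : Fin (d+1) → ℕ), y.2) = id y
          rw [← hhead1 y hy, Fin.cons_self_tail]
          rfl
        rw [hl₁', List.map_map, h3] at h2
        exact h2
      · -- heads condition
        intro k' hk'
        rcases List.mem_cons.1 hk' with rfl | hk'
        · exact ⟨x, List.mem_cons_self, rfl⟩
        · obtain ⟨y, hy, hyk⟩ := hh₂ k' hk'
          exact ⟨y, hsub2.subset hy, hyk⟩

lemma encodeT : ∀ (d : ℕ) (l : List ((Fin d → ℕ) × L)), (l.map Prod.fst).Nodup →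
    ∃ t : Tr L d, wf L d t ∧ (leaves L d t : Multiset ((Fin d → ℕ) × L)) = ↑l := by
  intro d
  induction d with
  | zero =>
    intro l hnd
    cases l with
    | nil => exact ⟨(none : Option L), trivial, rfl⟩
    | cons x rest =>
      cases rest with
      | nil =>
        refine ⟨(some x.2 : Option L), trivial, ?_⟩
        have hx1 : (Fin.elim0 : Fin 0 → ℕ) = x.1 := Subsingleton.elim _ _
        show (([((Fin.elim0 : Fin 0 → ℕ), x.2)] : List ((Fin 0 → ℕ) × L)) : Multiset ((Fin 0 → ℕ) × L))
          = (([x] : List ((Fin 0 → ℕ) × L)) : Multiset ((Fin 0 → ℕ) × L))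
        rw [hx1]
      | cons y rest2 =>
        exfalso
        simp only [List.map_cons, List.nodup_cons, List.mem_cons, List.mem_map] at hnd
        exact hnd.1 (Or.inl (Subsingleton.elim _ _))
  | succ d ih =>
    intro l hnd
    obtain ⟨ts, hw, hm, _⟩ := encode_aux d ih l.length l le_rfl hnd
    exact ⟨(ts : Tr L (d+1)), hw, hm⟩


end Shrub

/-- Any class of `C`-coloured graphs of bounded shrub-depth is well-quasi-ordered under
the colour-preserving induced subgraph relation: every infinite sequence of coloured
graphs from `TM(d,m)` contains indices `i < j` with a colour-preserving induced-subgraph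
embedding of the `i`-th graph into the `j`-th. -/
theorem stmt_16 (d m : ℕ) (C : Type) [Fintype C]
    (V : ℕ → Type) [∀ n, Fintype (V n)]
    (G : ∀ n, SimpleGraph (V n)) (col : ∀ n, V n → C)
    (h : ∀ n, InTM d m (G n)) :
    ∃ i j : ℕ, i < j ∧ ∃ φ : G i ↪g G j, ∀ v, col j (φ v) = col i v := by
  classical
  set L := (Fin m × C) with hL
  have M : ∀ n, TreeModel (G n) d m := fun n => (h n).some
  set lab : ∀ n, V n → L := fun n v => ((M n).col v, col n v) with hlab
  have hdat : ∀ n, ∃ t : Shrub.Tr L d, Shrub.wf L d t ∧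
      (Shrub.leaves L d t : Multiset ((Fin d → ℕ) × L)) =
        ↑(((Finset.univ : Finset (V n)).toList).map fun v => ((M n).f v, lab n v)) := by
    intro n
    apply Shrub.encodeT
    rw [List.map_map]
    have heq : (Prod.fst ∘ fun v : V n => ((M n).f v, lab n v)) = (M n).f := rfl
    rw [heq]
    exact (Finset.nodup_toList _).map (M n).inj
  choose t hwf hm using hdat
  have memfwd : ∀ n (v : V n), ((M n).f v, lab n v) ∈ Shrub.leaves L d (t n) := by
    intro n v
    have hmem : ((M n).f v, lab n v) ∈ (((Finset.univ : Finset (V n)).toList).map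
        fun v => ((M n).f v, lab n v)) :=
      List.mem_map_of_mem (Finset.mem_toList.2 (Finset.mem_univ v))
    exact (Multiset.coe_eq_coe.1 (hm n)).mem_iff.2 hmem
  have membwd : ∀ n x, x ∈ Shrub.leaves L d (t n) → ∃ v : V n, ((M n).f v, lab n v) = x := by
    intro n x hx
    have hmem := (Multiset.coe_eq_coe.1 (hm n)).mem_iff.1 hx
    obtain ⟨v, _, hv⟩ := List.mem_map.1 hmem
    exact ⟨v, hv⟩
  obtain ⟨s0, hs0⟩ := Finite.exists_infinite_fiber
    (fun n => (fun a b (l : Fin (d+1)) => decide ((M n).S a b (l : ℕ)) :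
      Fin m → Fin m → Fin (d+1) → Bool))
  haveI : Infinite ((fun n => (fun a b (l : Fin (d+1)) => decide ((M n).S a b (l : ℕ)) :
      Fin m → Fin m → Fin (d+1) → Bool)) ⁻¹' {s0}) := hs0
  set A : Set ℕ := (fun n => (fun a b (l : Fin (d+1)) => decide ((M n).S a b (l : ℕ)) :
      Fin m → Fin m → Fin (d+1) → Bool)) ⁻¹' {s0} with hA
  let e := Nat.orderEmbeddingOfSet A
  have he : ∀ k : ℕ, (fun a b (l : Fin (d+1)) => decide ((M (e k)).S a b (l : ℕ))) = s0 := by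
    intro k
    have hr : e k ∈ A := by
      have hrr := Set.mem_range_self (f := ⇑e) k
      rwa [Nat.orderEmbeddingOfSet_range] at hrr
    exact hr
  obtain ⟨k, l, hkl, hle⟩ := (Shrub.tle_pwo (L := L) d).exists_lt (f := fun k => t (e k)) (fun _ => Set.mem_univ _)
  refine ⟨e k, e l, e.strictMono hkl, ?_⟩
  obtain ⟨p, hpf, hps, hpl, hpp⟩ :=
    Shrub.emb_of_tle d (t (e k)) (t (e l)) (hwf _) (hwf _) hle
  set i := e k with hi
  set j := e l with hj
  have hxv : ∀ v : V i, ∃ x, x ∈ p ∧ x.1 = ((M i).f v, lab i v) := by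
    intro v
    have hmem : ((M i).f v, lab i v) ∈ p.map Prod.fst := hpf ▸ memfwd i v
    obtain ⟨x, hx, hx2⟩ := List.mem_map.1 hmem
    exact ⟨x, hx, hx2⟩
  choose xv hxvp hxv1 using hxv
  have hximg : ∀ v : V i, ∃ w : V j, ((M j).f w, lab j w) = (xv v).2 := by
    intro v
    exact membwd j _ (hps.subset (List.mem_map_of_mem (f := Prod.snd) (hxvp v)))
  choose φ hφ using hximg
  have hfx : ∀ v, (M i).f v = (xv v).1.1 := fun v => (congrArg Prod.fst (hxv1 v)).symm
  have hlabx : ∀ v, lab i v = (xv v).1.2 := fun v => (congrArg Prod.snd (hxv1 v)).symm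
  have hfj : ∀ v, (M j).f (φ v) = (xv v).2.1 := fun v => congrArg Prod.fst (hφ v)
  have hlabj : ∀ v, lab j (φ v) = (xv v).2.2 := fun v => congrArg Prod.snd (hφ v)
  have hlabeq : ∀ v, lab j (φ v) = lab i v := by
    intro v
    rw [hlabj, hlabx]
    exact (hpl (xv v) (hxvp v)).symm
  have hpref : ∀ u v : V i,
      prefLen ((M j).f (φ u)) ((M j).f (φ v)) = prefLen ((M i).f u) ((M i).f v) := by
    intro u v
    rw [hfj, hfj, hfx, hfx]
    exact (hpp (xv u) (hxvp u) (xv v) (hxvp v)).symm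
  have hinj : Function.Injective φ := by
    intro u v huv
    have h1 : prefLen ((M j).f (φ u)) ((M j).f (φ v)) = d := by
      rw [huv]; exact Shrub.prefLen_self _
    have h2 := hpref u v
    rw [h1] at h2
    exact (M i).inj (Shrub.eq_of_prefLen_eq h2.symm)
  have hSiff : ∀ (a b : Fin m) (ℓ : ℕ), ℓ ≤ d → ((M i).S a b ℓ ↔ (M j).S a b ℓ) := by
    intro a b ℓ hℓ
    have h1 := congrFun (congrFun (congrFun ((he k).trans (he l).symm) a) b)
      (⟨ℓ, by omega⟩ : Fin (d+1))
    exact decide_eq_decide.1 h1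
  have hadj : ∀ u v : V i, ((G j).Adj (φ u) (φ v) ↔ (G i).Adj u v) := by
    intro u v
    by_cases huv : u = v
    · subst huv
      exact iff_of_false (G j).irrefl (G i).irrefl
    · have hφuv : φ u ≠ φ v := fun hc => huv (hinj hc)
      rw [(M i).adj u v huv, (M j).adj (φ u) (φ v) hφuv]
      have hc1 : (M j).col (φ u) = (M i).col u := congrArg Prod.fst (hlabeq u)
      have hc2 : (M j).col (φ v) = (M i).col v := congrArg Prod.fst (hlabeq v)
      rw [hc1, hc2, hpref u v]
      exact (hSiff _ _ _ (by omega)).symm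
  exact ⟨⟨⟨φ, hinj⟩, fun {a b} => hadj a b⟩, fun v => congrArg Prod.snd (hlabeq v)⟩
end
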